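/- arXiv:2003.08702 — 6 statements merged into one kernel-verified Lean document; each statement's English description precedes it below -/
import Mathlib

section
/- The entire function g(z) = (1 - √2·z + z²)·e^{√2·z} has Taylor expansion g(z) = 1 + Σ_{k≥3} (2^{(k-2)/2} / (k·(k-3)!))·z^k; in particular all Taylor coefficients of g at 0 are nonnegative. -/
open Complex

/-- g(z) = (1 - √2·z + z²)·e^{√2·z} -/
noncomputable def g (z : ℂ) : ℂ :=
  (1 - (Real.sqrt 2 : ℂ) * z + z ^ 2) * Complex.exp ((Real.sqrt 2 : ℂ) * z)

private lemma s_sq : (Real.sqrt 2 : ℂ) ^ 2 = 2 := by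
  norm_cast
  rw [Real.sq_sqrt] <;> norm_num

private lemma iter (n : ℕ) : iteratedDeriv n g =
    fun z => ((((n:ℂ)-1)*((n:ℂ)-2)*(Real.sqrt 2:ℂ)^n/2)
      + ((n:ℂ)-1)*(Real.sqrt 2:ℂ)^(n+1)*z + (Real.sqrt 2:ℂ)^n * z^2)
      * Complex.exp ((Real.sqrt 2:ℂ)*z) := by
  set s : ℂ := (Real.sqrt 2 : ℂ) with hs
  induction n with
  | zero => funext z; simp [g]; ring
  | succ n ih =>
    rw [iteratedDeriv_succ, ih]
    funext z
    set a : ℂ := ((n:ℂ)-1)*((n:ℂ)-2)*s^n/2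
    set b : ℂ := ((n:ℂ)-1)*s^(n+1)
    set c : ℂ := s^n
    have h1 : HasDerivAt (fun z : ℂ => a + b*z + c*z^2) (b + 2*c*z) z := by
      have := ((hasDerivAt_const z a).add ((hasDerivAt_id z).const_mul b)).add
        ((hasDerivAt_pow 2 z).const_mul c)
      refine this.congr_deriv ?_
      simp; ring
    have h2 : HasDerivAt (fun z : ℂ => Complex.exp (s*z)) (Complex.exp (s*z)*s) z := by
      exact ((Complex.hasDerivAt_exp (s*z)).comp z ((hasDerivAt_id z).const_mul s)).congr_deriv (by simp)
    have hd : deriv (fun z => (a + b*z + c*z^2) * Complex.exp (s*z)) z = _ := (h1.mul h2).deriv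
    rw [hd]
    have hq : s^2 = 2 := by rw [hs]; exact s_sq
    push_cast
    simp only [a, b, c]
    linear_combination (-1 * Complex.exp (s*z) * s^n * z) * hq

private lemma h0 (n : ℕ) : iteratedDeriv n g 0 =
    ((n:ℂ)-1)*((n:ℂ)-2)*(Real.sqrt 2:ℂ)^n/2 := by
  rw [iter]; simp

private lemma hcoef (k : ℕ) (hk : 3 ≤ k) :
    iteratedDeriv k g 0 / (Nat.factorial k : ℂ) =
      (((2 : ℝ) ^ (((k : ℝ) - 2) / 2) / (k * Nat.factorial (k - 3)) : ℝ) : ℂ) := by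
  obtain ⟨m, rfl⟩ : ∃ m, k = m + 3 := ⟨k - 3, by omega⟩
  rw [h0]
  have hr : (2:ℝ)^((((m+3:ℕ):ℝ)-2)/2) = Real.sqrt 2 ^ (m+3) / 2 := by
    have hs : Real.sqrt 2 = (2:ℝ) ^ ((1:ℝ)/2) := Real.sqrt_eq_rpow 2
    rw [hs, ← Real.rpow_natCast ((2:ℝ) ^ ((1:ℝ)/2)) (m+3), ← Real.rpow_mul (by norm_num)]
    rw [show ((((m+3:ℕ):ℝ))-2)/2 = (1:ℝ)/2*((m+3:ℕ):ℝ) - 1 by push_cast; ring]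
    rw [Real.rpow_sub (by norm_num), Real.rpow_one]
  rw [hr]
  have hfac : (Nat.factorial (m+3) : ℂ) = ((m:ℂ)+3)*((m:ℂ)+2)*((m:ℂ)+1)*(Nat.factorial m : ℂ) := by
    simp [Nat.factorial_succ]
    push_cast
    ring
  have hms : (m+3) - 3 = m := by omega
  rw [hms, hfac]
  have hm : (Nat.factorial m : ℂ) ≠ 0 := by exact_mod_cast Nat.factorial_ne_zero m
  have h1 : (m:ℂ)+1 ≠ 0 := by exact_mod_cast Nat.cast_add_one_ne_zero (R := ℂ) m
  have h2 : (m:ℂ)+2 ≠ 0 := by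
    have : ((m+2:ℕ):ℂ) ≠ 0 := Nat.cast_ne_zero.mpr (by omega)
    push_cast at this; exact this
  have h3 : (m:ℂ)+3 ≠ 0 := by
    have : ((m+3:ℕ):ℂ) ≠ 0 := Nat.cast_ne_zero.mpr (by omega)
    push_cast at this; exact this
  push_cast
  rw [div_div, div_div, div_eq_div_iff (by
      refine mul_ne_zero two_ne_zero (mul_ne_zero (mul_ne_zero (mul_ne_zero h3 h2) h1) hm))
    (by
      refine mul_ne_zero two_ne_zero (mul_ne_zero h3 hm))]
  ring

/-- The Taylor coefficients of g at 0 are: 1, 0, 0, and 2^{(k-2)/2}/(k·(k-3)!) for k ≥ 3;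
in particular all of them are nonnegative reals. -/
theorem stmt0 :
    iteratedDeriv 0 g 0 / (Nat.factorial 0 : ℂ) = 1 ∧
    iteratedDeriv 1 g 0 / (Nat.factorial 1 : ℂ) = 0 ∧
    iteratedDeriv 2 g 0 / (Nat.factorial 2 : ℂ) = 0 ∧
    (∀ k : ℕ, 3 ≤ k →
      iteratedDeriv k g 0 / (Nat.factorial k : ℂ) =
        (((2 : ℝ) ^ (((k : ℝ) - 2) / 2) / (k * Nat.factorial (k - 3)) : ℝ) : ℂ)) ∧
    (∀ k : ℕ, 0 ≤ (iteratedDeriv k g 0 / (Nat.factorial k : ℂ)).re ∧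
      (iteratedDeriv k g 0 / (Nat.factorial k : ℂ)).im = 0) := by
  refine ⟨by rw [h0]; norm_num, by rw [h0]; norm_num, by rw [h0]; norm_num, hcoef, ?_⟩
  intro k
  rcases Nat.lt_or_ge k 3 with hk | hk
  · interval_cases k <;> rw [h0] <;> norm_num
  · rw [hcoef k hk]
    simp only [Complex.ofReal_re, Complex.ofReal_im]
    exact ⟨by positivity, trivial⟩
end

section
/- For every r > 0, the maximum over φ ∈ [0, 2π] of |(1 - √2·r·e^{iφ} + r²·e^{2iφ})·exp(√2·r·e^{iφ})| is attained at φ = 0 and equals (1 - √2·r + r²)·e^{√2·r}. -/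
open Complex

noncomputable def aa (n : ℕ) : ℝ :=
  Real.sqrt 2 ^ n * ((n : ℝ) - 1) * ((n : ℝ) - 2) / (2 * n.factorial)

lemma aa_nonneg (n : ℕ) : 0 ≤ aa n := by
  match n with
  | 0 => norm_num [aa]
  | 1 => norm_num [aa]
  | (n+2) =>
    unfold aa
    have h1 : (0:ℝ) ≤ Real.sqrt 2 ^ (n+2) := pow_nonneg (Real.sqrt_nonneg 2) _
    have h2 : (0:ℝ) ≤ ((n+2 : ℕ) : ℝ) - 1 := by push_cast; linarith [Nat.cast_nonneg (α := ℝ) n]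
    have h3 : (0:ℝ) ≤ ((n+2 : ℕ) : ℝ) - 2 := by push_cast; linarith [Nat.cast_nonneg (α := ℝ) n]
    have h4 : (0:ℝ) < 2 * ((n+2).factorial : ℝ) := by positivity
    positivity

lemma sqrt_two_sq : ((Real.sqrt 2 : ℂ)) ^ 2 = 2 := by
  have h : Real.sqrt 2 ^ 2 = 2 := Real.sq_sqrt (by norm_num)
  calc ((Real.sqrt 2 : ℂ)) ^ 2 = ((Real.sqrt 2 ^ 2 : ℝ) : ℂ) := by push_cast; ring
    _ = 2 := by rw [h]; norm_num

lemma hkey (z : ℂ) : HasSum (fun n : ℕ => (aa n : ℂ) * z ^ n) (g z) := by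
  set s : ℂ := (Real.sqrt 2 : ℂ) with hs
  have hexp : Complex.exp (s * z) = ∑' n : ℕ, (s*z) ^ n / n.factorial := by
    rw [Complex.exp_eq_exp_ℂ, NormedSpace.exp_eq_tsum_div]
  have hsum : Summable (fun n : ℕ => (s*z) ^ n / (n.factorial : ℂ)) :=
    NormedSpace.expSeries_div_summable (s*z)
  have h1 : HasSum (fun n : ℕ => (s*z) ^ n / (n.factorial : ℂ)) (Complex.exp (s*z)) := by
    rw [hexp]; exact hsum.hasSum
  have h2' : HasSum (fun n : ℕ => s*z*((s*z) ^ n / (n.factorial : ℂ))) (s*z*Complex.exp (s*z)) :=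
    h1.mul_left _
  have h2 : HasSum (fun n : ℕ => (n : ℂ) * (s*z) ^ n / (n.factorial : ℂ))
      (s*z*Complex.exp (s*z)) := by
    rw [← hasSum_nat_add_iff' (f := fun n : ℕ => (n : ℂ) * (s*z) ^ n / (n.factorial : ℂ)) 1]
    simp only [Finset.range_one, Finset.sum_singleton, Nat.cast_zero, zero_mul, zero_div, sub_zero]
    convert h2' using 2 with n
    · rfl
    have hne : ((n.factorial : ℂ)) ≠ 0 := by exact_mod_cast n.factorial_ne_zero
    have hne2 : ((n : ℂ) + 1) ≠ 0 := by exact_mod_cast (Nat.cast_add_one_ne_zero (R := ℂ) n)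
    rw [Nat.factorial_succ]
    push_cast
    field_simp
    ring
  have h3' : HasSum (fun n : ℕ => z^2*((s*z) ^ n / (n.factorial : ℂ))) (z^2*Complex.exp (s*z)) :=
    h1.mul_left _
  have h3 : HasSum (fun n : ℕ => (n : ℂ) * ((n:ℂ)-1) * (s*z) ^ n / (2 * n.factorial : ℂ))
      (z^2*Complex.exp (s*z)) := by
    rw [← hasSum_nat_add_iff'
      (f := fun n : ℕ => (n : ℂ) * ((n:ℂ)-1) * (s*z) ^ n / (2 * n.factorial : ℂ)) 2]
    have hz : ∑ i ∈ Finset.range 2,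
        ((i : ℂ) * ((i:ℂ)-1) * (s*z) ^ i / (2 * i.factorial : ℂ)) = 0 := by
      simp [Finset.sum_range_succ]
    rw [hz, sub_zero]
    convert h3' using 2 with n
    · rfl
    have hne : ((n.factorial : ℂ)) ≠ 0 := by exact_mod_cast n.factorial_ne_zero
    have hs2 : s ^ 2 = 2 := sqrt_two_sq
    have hfac : (((n+2).factorial : ℕ) : ℂ) = ((n:ℂ)+2) * ((n:ℂ)+1) * (n.factorial : ℂ) := by
      rw [Nat.factorial_succ, Nat.factorial_succ]; push_cast; ring
    have hne2 : ((n : ℂ) + 2) ≠ 0 := by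
      have := Nat.cast_add_one_ne_zero (R := ℂ) (n+1); push_cast at this ⊢; convert this using 1; ring
    have hne3 : ((n : ℂ) + 1) ≠ 0 := Nat.cast_add_one_ne_zero (R := ℂ) n
    push_cast
    rw [hfac]
    have hpow : (s * z) ^ (n+2) = s^2 * z^2 * (s*z)^n := by ring
    rw [hpow, hs2]
    field_simp
    ring
  have hcomb : HasSum (fun n : ℕ =>
      (s*z) ^ n / (n.factorial : ℂ) - (n : ℂ) * (s*z) ^ n / (n.factorial : ℂ)
        + (n : ℂ) * ((n:ℂ)-1) * (s*z) ^ n / (2 * n.factorial : ℂ))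
      (Complex.exp (s*z) - s*z*Complex.exp (s*z) + z^2*Complex.exp (s*z)) :=
    (h1.sub h2).add h3
  have hg : g z = Complex.exp (s*z) - s*z*Complex.exp (s*z) + z^2*Complex.exp (s*z) := by
    unfold g; rw [← hs]; ring
  rw [hg]
  convert hcomb using 2 with n
  have hne : ((n.factorial : ℂ)) ≠ 0 := by exact_mod_cast n.factorial_ne_zero
  unfold aa
  push_cast
  rw [mul_pow]
  field_simp
  ring

/-- For every r > 0, the maximum over φ ∈ [0,2π] of |g(r·e^{iφ})| is attained at φ = 0
and equals (1 - √2·r + r²)·e^{√2·r}. -/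
theorem stmt1 (r : ℝ) (hr : 0 < r) :
    IsMaxOn (fun φ : ℝ => ‖g ((r : ℂ) * Complex.exp (φ * Complex.I))‖)
      (Set.Icc 0 (2 * Real.pi)) 0 ∧
    ‖g ((r : ℂ) * Complex.exp ((0 : ℝ) * Complex.I))‖
      = (1 - Real.sqrt 2 * r + r ^ 2) * Real.exp (Real.sqrt 2 * r) := by
  have hz0 : ((r : ℂ) * Complex.exp (((0 : ℝ) : ℂ) * Complex.I)) = (r : ℂ) := by
    norm_num
  have hcast : (fun n : ℕ => (aa n : ℂ) * (r:ℂ) ^ n)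
      = fun n : ℕ => ((aa n * r ^ n : ℝ) : ℂ) := by
    funext n; push_cast; ring
  have hS : Summable (fun n : ℕ => aa n * r ^ n) := by
    apply Complex.summable_ofReal.mp
    rw [← hcast]
    exact (hkey (r : ℂ)).summable
  set S : ℝ := ∑' n : ℕ, aa n * r ^ n with hSdef
  have hSnonneg : 0 ≤ S :=
    tsum_nonneg fun n => mul_nonneg (aa_nonneg n) (pow_nonneg hr.le n)
  have hgr : g (r : ℂ) = (S : ℂ) := by
    have h1 : HasSum (fun n : ℕ => ((aa n * r ^ n : ℝ) : ℂ)) (g (r:ℂ)) := by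
      rw [← hcast]; exact hkey (r : ℂ)
    have h2 : HasSum (fun n : ℕ => ((aa n * r ^ n : ℝ) : ℂ)) ((S : ℂ)) :=
      Complex.hasSum_ofReal.mpr hS.hasSum
    exact h1.unique h2
  have habs_gr : ‖g (r : ℂ)‖ = S := by
    rw [hgr, Complex.norm_real, Real.norm_eq_abs, _root_.abs_of_nonneg hSnonneg]
  -- equality part
  have heq : ‖g ((r : ℂ) * Complex.exp (((0:ℝ):ℂ) * Complex.I))‖
      = (1 - Real.sqrt 2 * r + r ^ 2) * Real.exp (Real.sqrt 2 * r) := by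
    rw [hz0]
    unfold g
    rw [norm_mul]
    have harg : ((Real.sqrt 2 : ℂ)) * (r : ℂ) = ((Real.sqrt 2 * r : ℝ) : ℂ) := by push_cast; ring
    have h1 : (1 - ((Real.sqrt 2 * r : ℝ) : ℂ) + (r:ℂ) ^ 2)
        = ((1 - Real.sqrt 2 * r + r ^ 2 : ℝ) : ℂ) := by push_cast; ring
    rw [harg, h1, Complex.norm_real, Real.norm_eq_abs, Complex.norm_exp]
    have hpos : 0 ≤ 1 - Real.sqrt 2 * r + r ^ 2 := by
      nlinarith [sq_nonneg (r - Real.sqrt 2 / 2), Real.sq_sqrt (by norm_num : (2:ℝ) ≥ 0),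
        Real.sqrt_nonneg 2]
    rw [_root_.abs_of_nonneg hpos, Complex.ofReal_re]
  constructor
  · intro φ _
    simp only [Set.mem_setOf_eq]
    set z : ℂ := (r : ℂ) * Complex.exp ((φ:ℂ) * Complex.I) with hzdef
    have hnz : ‖z‖ = r := by
      rw [hzdef]
      rw [norm_mul, Complex.norm_real, Real.norm_eq_abs,
        Complex.norm_exp_ofReal_mul_I, _root_.abs_of_nonneg hr.le, mul_one]
    have hnorm : ∀ n : ℕ, ‖(aa n : ℂ) * z ^ n‖ = aa n * r ^ n := by
      intro n
      rw [norm_mul, norm_pow, hnz, Complex.norm_real, Real.norm_eq_abs,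
        _root_.abs_of_nonneg (aa_nonneg n)]
    have hsumnorm : Summable (fun n : ℕ => ‖(aa n : ℂ) * z ^ n‖) := by
      simpa only [hnorm] using hS
    have hle : ‖g z‖ ≤ S := by
      rw [← (hkey z).tsum_eq]
      calc ‖∑' n : ℕ, (aa n : ℂ) * z ^ n‖ ≤ ∑' n : ℕ, ‖(aa n : ℂ) * z ^ n‖ :=
            norm_tsum_le_tsum_norm hsumnorm
        _ = ∑' n : ℕ, aa n * r ^ n := by exact tsum_congr hnorm
        _ = S := rfl
    calc ‖g z‖ ≤ S := hle
      _ = ‖g ((r : ℂ) * Complex.exp (((0:ℝ):ℂ) * Complex.I))‖ := by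
          rw [hz0, habs_gr]
  · exact heq
end

section
/- The improper integral ∫₀^∞ (log(1 - √2·s + s²) + √2·s) / s³ ds converges and equals 3π/4. -/
open Real Set Filter MeasureTheory Topology

noncomputable def Ff (s : ℝ) : ℝ := Real.log (1 - Real.sqrt 2 * s + s ^ 2) + Real.sqrt 2 * s

lemma sq2 : Real.sqrt 2 ^ 2 = 2 := Real.sq_sqrt (by norm_num)

lemma hq (s : ℝ) : (1:ℝ)/2 ≤ 1 - Real.sqrt 2 * s + s ^ 2 := by
  nlinarith [sq_nonneg (s - Real.sqrt 2 / 2), sq2]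

lemma hqpos (s : ℝ) : (0:ℝ) < 1 - Real.sqrt 2 * s + s ^ 2 := lt_of_lt_of_le (by norm_num) (hq s)

lemma hf' (s : ℝ) : HasDerivAt Ff (Real.sqrt 2 * s ^ 2 / (1 - Real.sqrt 2 * s + s ^ 2)) s := by
  have h1 : HasDerivAt (fun s : ℝ => 1 - Real.sqrt 2 * s + s ^ 2) (-Real.sqrt 2 + 2 * s) s := by
    have := ((hasDerivAt_const s (1:ℝ)).sub ((hasDerivAt_id s).const_mul (Real.sqrt 2))).add
      (hasDerivAt_pow 2 s)
    exact this.congr_deriv (by ring)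
  have h2 := (h1.log (hqpos s).ne').add ((hasDerivAt_id s).const_mul (Real.sqrt 2))
  convert h2 using 1
  · rfl
  · rfl
  · rfl
  have hne := (hqpos s).ne'
  field_simp
  linear_combination s * sq2

lemma Ff_zero : Ff 0 = 0 := by simp [Ff]

lemma Ff_nonneg {s : ℝ} (hs : 0 ≤ s) : 0 ≤ Ff s := by
  have hmono : MonotoneOn Ff (Ici 0) := by
    apply monotoneOn_of_deriv_nonneg (convex_Ici 0)
      (fun x _ => (hf' x).continuousAt.continuousWithinAt)
      (fun x _ => ((hf' x).differentiableAt).differentiableWithinAt)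
    intro x hx
    rw [(hf' x).deriv]
    exact div_nonneg (by positivity) (hqpos x).le
  simpa [Ff_zero] using hmono self_mem_Ici hs hs

lemma Ff_le_cube {s : ℝ} (hs : 0 ≤ s) : Ff s ≤ s ^ 3 := by
  have hG : ∀ x : ℝ, HasDerivAt (fun y => y ^ 3 - Ff y)
      (3 * x ^ 2 - Real.sqrt 2 * x ^ 2 / (1 - Real.sqrt 2 * x + x ^ 2)) x := by
    intro x
    exact (hasDerivAt_pow 3 x).sub (hf' x)
  have hmono : MonotoneOn (fun y : ℝ => y ^ 3 - Ff y) (Ici 0) := by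
    apply monotoneOn_of_deriv_nonneg (convex_Ici 0)
      (fun x _ => (hG x).continuousAt.continuousWithinAt)
      (fun x _ => ((hG x).differentiableAt).differentiableWithinAt)
    intro x _
    rw [(hG x).deriv]
    have h1 := hq x
    have h3 : Real.sqrt 2 ≤ 3/2 := by nlinarith [sq2, Real.sqrt_nonneg 2]
    have h2 : Real.sqrt 2 * x ^ 2 / (1 - Real.sqrt 2 * x + x ^ 2) ≤ 3 * x ^ 2 := by
      rw [div_le_iff₀ (hqpos x)]
      have e1 := mul_le_mul_of_nonneg_right h3 (sq_nonneg x)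
      have e2 := mul_le_mul_of_nonneg_left h1 (show (0:ℝ) ≤ 3*x^2 by positivity)
      nlinarith
    linarith
  have := hmono self_mem_Ici hs hs
  simpa [Ff_zero] using this

noncomputable def FF (s : ℝ) : ℝ := -(Ff s) / (2 * s ^ 2) + Real.arctan (Real.sqrt 2 * s - 1)

lemma FF_deriv {x : ℝ} (hx : 0 < x) : HasDerivAt FF (Ff x / x ^ 3) x := by
  have h2 : HasDerivAt (fun s : ℝ => 2 * s ^ 2) (4 * x) x := by
    simpa using ((hasDerivAt_pow 2 x).const_mul 2).congr_deriv (by ring)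
  have hd : (2 * x ^ 2 : ℝ) ≠ 0 := by positivity
  have hA := ((hf' x).neg.div h2 hd)
  have hlin : HasDerivAt (fun s : ℝ => Real.sqrt 2 * s - 1) (Real.sqrt 2) x := by
    simpa using ((hasDerivAt_id x).const_mul (Real.sqrt 2)).sub_const 1
  have hB := (Real.hasDerivAt_arctan (Real.sqrt 2 * x - 1)).comp x hlin
  have := hA.add hB
  convert this using 1
  · rfl
  · rfl
  · rfl
  have hne := (hqpos x).ne'
  have hx' : x ≠ 0 := hx.ne'
  have h12 : (1 + (Real.sqrt 2 * x - 1) ^ 2) = 2 * (1 - Real.sqrt 2 * x + x ^ 2) := by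
    have := sq2; nlinarith
  rw [h12, Pi.neg_apply]
  unfold Ff
  field_simp
  ring

lemma FF_zero : FF 0 = -(π/4) := by
  simp [FF, Ff, Real.arctan_neg, Real.arctan_one]

lemma FF_cont : ContinuousWithinAt FF (Ici 0) 0 := by
  have h2 : ContinuousWithinAt (fun s : ℝ => Real.arctan (Real.sqrt 2 * s - 1)) (Ici 0) 0 :=
    (Real.continuous_arctan.comp (by continuity)).continuousWithinAt
  have h1 : Tendsto (fun s : ℝ => -(Ff s) / (2 * s ^ 2)) (𝓝[Ici 0] 0) (𝓝 0) := by
    apply tendsto_of_tendsto_of_tendsto_of_le_of_le'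
      (g := fun s : ℝ => -(s/2)) (h := fun _ : ℝ => (0:ℝ))
    · have : Tendsto (fun s : ℝ => -(s/2)) (𝓝 0) (𝓝 (-(0/2))) := by
        exact (continuous_id.div_const 2).neg.tendsto 0
      simpa using this.mono_left nhdsWithin_le_nhds
    · exact tendsto_const_nhds
    · filter_upwards [self_mem_nhdsWithin] with x (hx : (0:ℝ) ≤ x)
      rcases eq_or_lt_of_le hx with rfl | hx'
      · simp [Ff_zero]
      · rw [neg_div, neg_le_neg_iff, div_le_div_iff₀ (by positivity) (by norm_num)]
        nlinarith [Ff_le_cube hx]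
    · filter_upwards [self_mem_nhdsWithin] with x (hx : (0:ℝ) ≤ x)
      have : 0 ≤ Ff x / (2 * x ^ 2) := div_nonneg (Ff_nonneg hx) (by positivity)
      rw [neg_div]; linarith
  unfold ContinuousWithinAt
  rw [show FF 0 = 0 + Real.arctan (Real.sqrt 2 * 0 - 1) by
    simp [FF_zero, Real.arctan_neg, Real.arctan_one]]
  exact h1.add h2

lemma Ff_upper {x : ℝ} (hx : 0 ≤ x) : Ff x ≤ 2 * (1 + x) + Real.sqrt 2 * x := by
  have hq' := hqpos x
  have hsq : Real.sqrt (1 - Real.sqrt 2 * x + x ^ 2) ≤ 1 + x := by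
    rw [show (1 + x) = Real.sqrt ((1 + x) ^ 2) from (Real.sqrt_sq (by linarith)).symm]
    exact Real.sqrt_le_sqrt (by nlinarith [Real.sqrt_nonneg 2, hx])
  have hlog : Real.log (1 - Real.sqrt 2 * x + x ^ 2)
      = 2 * Real.log (Real.sqrt (1 - Real.sqrt 2 * x + x ^ 2)) := by
    rw [Real.log_sqrt hq'.le]; ring
  have h1 := Real.log_le_sub_one_of_pos (Real.sqrt_pos.2 hq')
  unfold Ff
  nlinarith

lemma FF_top : Tendsto FF atTop (𝓝 (π/2)) := by
  have h2 : Tendsto (fun s : ℝ => Real.arctan (Real.sqrt 2 * s - 1)) atTop (𝓝 (π/2)) := by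
    have hlin : Tendsto (fun s : ℝ => Real.sqrt 2 * s - 1) atTop atTop := by
      have := (tendsto_id (α := ℝ)).const_mul_atTop (Real.sqrt_pos.2 (by norm_num : (0:ℝ) < 2))
      simpa [sub_eq_add_neg] using tendsto_atTop_add_const_right atTop (-1) this
    exact (Real.tendsto_arctan_atTop.mono_right nhdsWithin_le_nhds).comp hlin
  have h1 : Tendsto (fun s : ℝ => -(Ff s) / (2 * s ^ 2)) atTop (𝓝 0) := by
    apply tendsto_of_tendsto_of_tendsto_of_le_of_le'
      (g := fun s : ℝ => -(3/s)) (h := fun _ : ℝ => (0:ℝ))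
    · simpa using (tendsto_const_nhds.div_atTop (tendsto_id (α := ℝ))).neg
    · exact tendsto_const_nhds
    · filter_upwards [eventually_ge_atTop (1:ℝ)] with x hx
      have hx0 : (0:ℝ) < x := by linarith
      have hb : Ff x ≤ 6 * x := by
        have := Ff_upper hx0.le
        have h3 : Real.sqrt 2 ≤ 3/2 := by nlinarith [sq2, Real.sqrt_nonneg 2]
        nlinarith [Real.sqrt_nonneg 2]
      rw [neg_div, neg_le_neg_iff, div_le_div_iff₀ (by positivity) (by positivity)]
      nlinarith
    · filter_upwards [eventually_ge_atTop (1:ℝ)] with x hx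
      have hx0 : (0:ℝ) < x := by linarith
      have : 0 ≤ Ff x / (2 * x ^ 2) := div_nonneg (Ff_nonneg hx0.le) (by positivity)
      rw [neg_div]; linarith
  have := h1.add h2
  rw [zero_add] at this
  exact this

/-- The improper integral ∫₀^∞ (log(1 - √2 s + s²) + √2 s)/s³ ds converges and equals 3π/4. -/
theorem stmt2 :
    MeasureTheory.IntegrableOn
      (fun s : ℝ => (Real.log (1 - Real.sqrt 2 * s + s ^ 2) + Real.sqrt 2 * s) / s ^ 3)
      (Set.Ioi 0) ∧
    (∫ s in Set.Ioi (0 : ℝ),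
        (Real.log (1 - Real.sqrt 2 * s + s ^ 2) + Real.sqrt 2 * s) / s ^ 3)
      = 3 * Real.pi / 4 := by
  have hderiv : ∀ x ∈ Set.Ioi (0:ℝ), HasDerivAt FF
      ((fun s : ℝ => (Real.log (1 - Real.sqrt 2 * s + s ^ 2) + Real.sqrt 2 * s) / s ^ 3) x) x :=
    fun x hx => FF_deriv hx
  have hpos : ∀ x ∈ Set.Ioi (0:ℝ),
      0 ≤ (fun s : ℝ => (Real.log (1 - Real.sqrt 2 * s + s ^ 2) + Real.sqrt 2 * s) / s ^ 3) x := by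
    intro x hx
    exact div_nonneg (Ff_nonneg (le_of_lt hx)) (pow_nonneg (le_of_lt hx) 3)
  constructor
  · exact integrableOn_Ioi_deriv_of_nonneg FF_cont hderiv hpos FF_top
  · rw [integral_Ioi_of_hasDerivAt_of_nonneg FF_cont hderiv hpos FF_top, FF_zero]
    ring
end

section
/- Let β > 0, δ > 1, and let {R_k} be a sequence with R_{k+1} > δ·R_k. Define H on [0,∞) by H(t) = 2∫₀^t s dν(s) − β·t², where dν(r) = β dr + Σ_k ((1/2)(a²−β)R_k·δ_{R_k} − β·χ_{[R_k, δR_k]}(r) dr) with a² = β·δ². Then H(t) ≥ 0 for all t ≥ 0. -/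
open MeasureTheory Set
open scoped ENNReal

/-- With dν(r) = β dr + Σ_k ((1/2)(a²-β)R_k·δ_{R_k} - β·χ_{[R_k,δR_k]}(r) dr) on (0,∞),
a = δ√β, and H(t) = 2∫₀^t s dν(s) - βt², one has H(t) ≥ 0 for all t ≥ 0. -/
theorem stmt10 (β δ : ℝ) (hβ : 0 < β) (hδ : 1 < δ)
    (R : ℕ → ℝ) (hR0 : 0 < R 0) (hR : ∀ k, δ * R k < R (k + 1))
    (a : ℝ) (ha : a = δ * Real.sqrt β)
    (ν : Measure ℝ)
    (hν : ν = (volume.restrict {r : ℝ | 0 < r ∧ ∀ k, r ∉ Set.Ico (R k) (δ * R k)}).withDensity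
        (fun _ => ENNReal.ofReal β)
      + Measure.sum (fun k : ℕ =>
          (ENNReal.ofReal ((1 / 2) * (a ^ 2 - β) * R k)) • Measure.dirac (R k)))
    (H : ℝ → ℝ)
    (hH : ∀ t : ℝ, H t = 2 * (∫ s in Set.Iic t, s ∂ν) - β * t ^ 2) :
    ∀ t : ℝ, 0 ≤ t → 0 ≤ H t := by
  classical
  have hδ0 : (0:ℝ) < δ := lt_trans one_pos hδ
  have hRpos : ∀ k, 0 < R k := by
    intro k; induction k with
    | zero => exact hR0
    | succ n ih => exact lt_trans (by positivity) (hR n)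
  have hRmono : StrictMono R :=
    strictMono_nat_of_lt_succ (fun n =>
      lt_trans (lt_mul_of_one_lt_left (hRpos n) hδ) (hR n))
  have hβa : a ^ 2 - β = (δ ^ 2 - 1) * β := by
    rw [ha, mul_pow, Real.sq_sqrt hβ.le]; ring
  have hδ2 : (1:ℝ) ≤ δ ^ 2 := by nlinarith
  have hβa0 : 0 ≤ a ^ 2 - β := by rw [hβa]; nlinarith
  intro t ht
  -- choose N such that k < N → R k ≤ t and N ≤ k → t < R k
  have hex : ∃ k, t < R k := by
    obtain ⟨n, hn⟩ := pow_unbounded_of_one_lt (t / R 0) hδ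
    have hpow : ∀ m, δ ^ m * R 0 ≤ R m := by
      intro m; induction m with
      | zero => simp
      | succ p ih =>
        have h1 : δ ^ (p+1) * R 0 = δ * (δ ^ p * R 0) := by ring
        rw [h1]
        calc δ * (δ ^ p * R 0) ≤ δ * R p := mul_le_mul_of_nonneg_left ih hδ0.le
          _ ≤ R (p+1) := (hR p).le
    exact ⟨n, lt_of_lt_of_le ((div_lt_iff₀ hR0).mp hn) (hpow n)⟩
  set N := Nat.find hex with hNdef
  have hN1 : ∀ k, N ≤ k → t < R k := fun k hk =>
    lt_of_lt_of_le (Nat.find_spec hex) (hRmono.monotone hk)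
  have hN2 : ∀ k < N, R k ≤ t := fun k hk => le_of_not_gt (Nat.find_min hex hk)
  set Sset : Set ℝ := {r : ℝ | 0 < r ∧ ∀ k, r ∉ Set.Ico (R k) (δ * R k)} with hSdef
  set c : ℕ → ℝ≥0∞ := fun k => ENNReal.ofReal ((1 / 2) * (a ^ 2 - β) * R k) with hcdef
  set g : ℕ → Measure ℝ := fun k => c k • Measure.dirac (R k) with hgdef
  -- restriction of ν to Iic t
  have hrestr : ν.restrict (Set.Iic t)
      = (ENNReal.ofReal β) • volume.restrict (Set.Iic t ∩ Sset)
        + ∑ k ∈ Finset.range N, g k := by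
    rw [hν, withDensity_const, Measure.restrict_add, Measure.restrict_smul,
      Measure.restrict_restrict measurableSet_Iic,
      Measure.restrict_sum _ measurableSet_Iic]
    congr 1
    have hg : ∀ k, (g k).restrict (Set.Iic t) = if k < N then g k else 0 := by
      intro k
      rw [hgdef]
      simp only [Measure.restrict_smul, restrict_dirac]
      by_cases hk : k < N
      · rw [if_pos (show R k ∈ Set.Iic t from hN2 k hk), if_pos hk]
      · rw [if_neg (show R k ∉ Set.Iic t from not_le.mpr (hN1 k (not_lt.mp hk))),
          if_neg hk, smul_zero]
    ext s hs
    rw [Measure.sum_apply _ hs, Measure.finset_sum_apply]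
    rw [tsum_eq_sum (s := Finset.range N) (fun k hk => by
      rw [hg k, if_neg (by simpa using hk)]; rfl)]
    exact Finset.sum_congr rfl (fun k hk => by
      rw [hg k, if_pos (Finset.mem_range.mp hk)])
  -- the cut-out intervals intersected with (0, t]
  set F : ℕ → Set ℝ := fun k => Set.Ioc 0 t ∩ Set.Ico (R k) (δ * R k) with hFdef
  have hFmeas : ∀ k, MeasurableSet (F k) := fun k =>
    measurableSet_Ioc.inter measurableSet_Ico
  have hFsub : ∀ k, F k ⊆ Set.Ioc 0 t := fun k => Set.inter_subset_left
  have hFdisj : Set.Pairwise ↑(Finset.range N) (Function.onFun Disjoint F) := by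
    have key : ∀ i j : ℕ, i < j → Disjoint (F i) (F j) := by
      intro i j hlt
      have hle : δ * R i ≤ R j := le_trans (hR i).le (hRmono.monotone (by omega))
      apply Set.disjoint_left.mpr
      rintro x ⟨-, hxi⟩ ⟨-, hxj⟩
      exact absurd (lt_of_lt_of_le hxi.2 (hle.trans hxj.1)) (lt_irrefl x)
    intro i _ j _ hij
    rcases lt_or_gt_of_ne hij with h | h
    · exact key i j h
    · exact (key j i h).symm
  -- decomposition of the good set
  have hset : Set.Iic t ∩ Sset = Set.Ioc 0 t \ ⋃ k ∈ Finset.range N, F k := by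
    ext r
    constructor
    · rintro ⟨h1, h2, h3⟩
      refine ⟨⟨h2, h1⟩, ?_⟩
      simp only [Set.mem_iUnion, not_exists]
      rintro k - ⟨-, hmem⟩
      exact h3 k hmem
    · rintro ⟨⟨h0, h1⟩, h2⟩
      simp only [Set.mem_iUnion, not_exists] at h2
      refine ⟨h1, h0, fun k hk => ?_⟩
      by_cases hkN : k < N
      · exact h2 k (Finset.mem_range.mpr hkN) ⟨⟨h0, h1⟩, hk⟩
      · exact absurd (lt_of_le_of_lt h1 (hN1 k (not_lt.mp hkN))) (not_lt.mpr hk.1)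
  -- integrability facts
  have IntOc : IntegrableOn (fun s : ℝ => s) (Set.Ioc 0 t) volume := by
    rw [← intervalIntegrable_iff_integrableOn_Ioc_of_le ht]
    exact intervalIntegral.intervalIntegrable_id
  have IntF : ∀ k, IntegrableOn (fun s : ℝ => s) (F k) volume :=
    fun k => IntOc.mono_set (hFsub k)
  have IntS : IntegrableOn (fun s : ℝ => s) (Set.Iic t ∩ Sset) volume := by
    rw [hset]; exact IntOc.mono_set Set.diff_subset
  have hIoc : ∫ s in Set.Ioc 0 t, s = t ^ 2 / 2 := by
    rw [← intervalIntegral.integral_of_le ht, integral_id]; ring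
  -- the main decomposition of the set integral
  have hdiff : ∫ s in Set.Iic t ∩ Sset, s
      = t ^ 2 / 2 - ∑ k ∈ Finset.range N, ∫ s in F k, s := by
    rw [hset, integral_diff (Finset.measurableSet_biUnion _ fun k _ => hFmeas k)
      IntOc (Set.iUnion₂_subset fun k _ => hFsub k), hIoc,
      integral_biUnion_finset _ (fun k _ => hFmeas k) hFdisj (fun k _ => IntF k)]
  have hcR : ∀ k, (0:ℝ) ≤ 1 / 2 * (a ^ 2 - β) * R k := by
    intro k
    have := (hRpos k).le
    positivity
  have int3 : ∀ k, Integrable (fun s : ℝ => s) (g k) := by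
    intro k
    refine Integrable.smul_measure ?_ ENNReal.ofReal_ne_top
    exact (integrable_const (R k)).congr (ae_eq_dirac (fun s : ℝ => s)).symm
  have int1 : Integrable (fun s : ℝ => s)
      ((ENNReal.ofReal β) • volume.restrict (Set.Iic t ∩ Sset)) :=
    IntS.smul_measure ENNReal.ofReal_ne_top
  have int2 : Integrable (fun s : ℝ => s) (∑ k ∈ Finset.range N, g k) :=
    integrable_finset_sum_measure.mpr fun k _ => int3 k
  have hI : ∫ s in Set.Iic t, s ∂ν
      = β * (t ^ 2 / 2 - ∑ k ∈ Finset.range N, ∫ s in F k, s)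
        + ∑ k ∈ Finset.range N, 1 / 2 * (a ^ 2 - β) * R k * R k := by
    rw [show (∫ s in Set.Iic t, s ∂ν) = ∫ s, s ∂(ν.restrict (Set.Iic t)) from rfl, hrestr,
      integral_add_measure int1 int2, integral_smul_measure,
      integral_finset_sum_measure fun k _ => int3 k]
    congr 1
    · rw [hdiff, ENNReal.toReal_ofReal hβ.le, smul_eq_mul]
    · refine Finset.sum_congr rfl fun k _ => ?_
      rw [hgdef]
      simp only
      rw [integral_smul_measure, integral_dirac, hcdef,
        ENNReal.toReal_ofReal (hcR k), smul_eq_mul]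
  -- per-term bound
  have hterm : ∀ k ∈ Finset.range N,
      2 * β * (∫ s in F k, s) ≤ 2 * (1 / 2 * (a ^ 2 - β) * R k * R k) := by
    intro k hk
    have hkN := Finset.mem_range.mp hk
    have hRt : R k ≤ t := hN2 k hkN
    have hRk := hRpos k
    have hRle : R k ≤ δ * R k := le_mul_of_one_le_left hRk.le hδ.le
    rcases le_or_gt (δ * R k) t with hcase | hcase
    · have hFk : F k = Set.Ico (R k) (δ * R k) := by
        ext x
        constructor
        · rintro ⟨-, hx⟩; exact hx
        · rintro ⟨hx1, hx2⟩
          exact ⟨⟨lt_of_lt_of_le hRk hx1, le_trans hx2.le hcase⟩, hx1, hx2⟩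
      have hJ : ∫ s in F k, s = ((δ * R k) ^ 2 - R k ^ 2) / 2 := by
        rw [hFk, integral_Ico_eq_integral_Ioo, ← integral_Ioc_eq_integral_Ioo,
          ← intervalIntegral.integral_of_le hRle, integral_id]
      rw [hJ, hβa]; ring_nf; nlinarith [sq_nonneg (R k)]
    · have hFk : F k = Set.Icc (R k) t := by
        ext x
        constructor
        · rintro ⟨hx1, hx2⟩; exact ⟨hx2.1, hx1.2⟩
        · rintro ⟨hx1, hx2⟩
          exact ⟨⟨lt_of_lt_of_le hRk hx1, hx2⟩, hx1, lt_of_le_of_lt hx2 hcase⟩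
      have hJ : ∫ s in F k, s = (t ^ 2 - R k ^ 2) / 2 := by
        rw [hFk, integral_Icc_eq_integral_Ioc,
          ← intervalIntegral.integral_of_le hRt, integral_id]
      have ht2 : t ^ 2 ≤ (δ * R k) ^ 2 := by nlinarith
      rw [hJ, hβa]; nlinarith
  have hsum_le : ∑ k ∈ Finset.range N, 2 * β * (∫ s in F k, s)
      ≤ ∑ k ∈ Finset.range N, 2 * (1 / 2 * (a ^ 2 - β) * R k * R k) :=
    Finset.sum_le_sum hterm
  rw [hH t, hI]
  rw [← Finset.mul_sum, ← Finset.mul_sum] at hsum_le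
  linarith
end

section
/- Let F be an entire function with simple zeros such that for some integers m, n: z^m·F ∈ F₀ and for every nonzero entire G, z^n·F·G ∉ F₀. Then by adding to or removing from the zero set of F a finite set of points, one obtains a set Λ such that {k_λ}_{λ∈Λ} is a complete and minimal system in the Fock space F. -/
open MeasureTheory Complex Filter Set Topology

noncomputable section

/-- Membership in the Fock space. -/
def MemFock (F : ℂ → ℂ) : Prop :=
  Differentiable ℂ F ∧
    MeasureTheory.Integrable
      (fun z : ℂ => ‖F z‖ ^ 2 * Real.exp (-Real.pi * ‖z‖ ^ 2))

/-- Membership in F₀: analytic on {|z| > 1} and square integrable there against the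
Gaussian weight. -/
def MemF0 (F : ℂ → ℂ) : Prop :=
  AnalyticOn ℂ F {z : ℂ | 1 < ‖z‖} ∧
    MeasureTheory.IntegrableOn
      (fun z : ℂ => ‖F z‖ ^ 2 * Real.exp (-Real.pi * ‖z‖ ^ 2))
      {z : ℂ | 1 < ‖z‖}

/-! ### Auxiliary lemmas -/

/-- A nonempty open subset of ℂ is infinite. -/
lemma aux_open_infinite {U : Set ℂ} (hU : IsOpen U) (hne : U.Nonempty) : U.Infinite := by
  obtain ⟨w, hw⟩ := hne
  intro hfin
  have h1 : U \ {w} ∈ 𝓝[≠] w :=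
    diff_mem_nhdsWithin_compl (hU.mem_nhds hw) {w}
  have h2 : (U \ {w})ᶜ ∈ 𝓝[≠] w := by
    have hcl : IsClosed (U \ {w}) := hfin.diff.isClosed
    have hwmem : w ∈ (U \ {w})ᶜ := by simp
    exact mem_nhdsWithin_of_mem_nhds (hcl.isOpen_compl.mem_nhds hwmem)
  have h3 : (∅ : Set ℂ) ∈ 𝓝[≠] w := by
    have := Filter.inter_mem h1 h2
    simpa using this
  exact (Filter.nonempty_of_mem h3).ne_empty rfl

/-- Identity theorem wrapper: an entire function vanishing on a nonempty open set is zero. -/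
lemma aux_eq_zero_of_zero_on_open {G : ℂ → ℂ} (hG : Differentiable ℂ G)
    {U : Set ℂ} (hU : IsOpen U) (hne : U.Nonempty) (hz : ∀ z ∈ U, G z = 0) : G = 0 := by
  obtain ⟨w, hw⟩ := hne
  have h1 : AnalyticOnNhd ℂ G univ := fun z _ => hG.analyticAt z
  have h2 : G =ᶠ[𝓝 w] 0 := by
    filter_upwards [hU.mem_nhds hw] with z hzU using hz z hzU
  funext z
  exact h1.eqOn_zero_of_preconnected_of_eventuallyEq_zero isPreconnected_univ (mem_univ w) h2
    (mem_univ z)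

lemma aux_dslope_entire {F : ℂ → ℂ} (hF : Differentiable ℂ F) (a : ℂ) :
    Differentiable ℂ (dslope F a) := by
  intro z
  rcases eq_or_ne z a with rfl | h
  · obtain ⟨p, hp⟩ := hF.analyticAt z
    exact hp.has_fpower_series_dslope_fslope.analyticAt.differentiableAt
  · exact (differentiableAt_dslope_of_ne h).2 (hF z)

/-- Division by a function with simple zeros. -/
lemma aux_div_simple {F G : ℂ → ℂ} (hF : Differentiable ℂ F) (hG : Differentiable ℂ G)
    (hs : ∀ z, F z = 0 → deriv F z ≠ 0) (hv : ∀ z, F z = 0 → G z = 0) :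
    ∃ H : ℂ → ℂ, Differentiable ℂ H ∧ ∀ z, G z = F z * H z := by
  classical
  refine ⟨fun z => if F z = 0 then deriv G z / deriv F z else G z / F z, ?_, ?_⟩
  · intro z₀
    by_cases h0 : F z₀ = 0
    · have hf1 : Differentiable ℂ (dslope F z₀) := aux_dslope_entire hF z₀
      have hg1 : Differentiable ℂ (dslope G z₀) := aux_dslope_entire hG z₀
      have hne : dslope F z₀ z₀ ≠ 0 := by rw [dslope_same]; exact hs z₀ h0
      have hquot : DifferentiableAt ℂ (fun z => dslope G z₀ z / dslope F z₀ z) z₀ :=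
        (hg1 z₀).div (hf1 z₀) hne
      have hev : (fun z => if F z = 0 then deriv G z / deriv F z else G z / F z)
          =ᶠ[𝓝 z₀] fun z => dslope G z₀ z / dslope F z₀ z := by
        filter_upwards [(hf1 z₀).continuousAt.eventually_ne hne] with z hz
        rcases eq_or_ne z z₀ with rfl | hzz
        · simp [h0, dslope_same]
        · have hFz : F z = (z - z₀) * dslope F z₀ z := by
            have h := sub_smul_dslope F z₀ z
            rw [smul_eq_mul, h0, sub_zero] at h
            exact h.symm
          have hGz : G z = (z - z₀) * dslope G z₀ z := by
            have h := sub_smul_dslope G z₀ z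
            rw [smul_eq_mul, hv z₀ h0, sub_zero] at h
            exact h.symm
          have hFne : F z ≠ 0 := by
            rw [hFz]; exact mul_ne_zero (sub_ne_zero.2 hzz) hz
          rw [if_neg hFne, hFz, hGz, mul_div_mul_left _ _ (sub_ne_zero.2 hzz)]
      exact (Filter.EventuallyEq.differentiableAt_iff hev).2 hquot
    · have hev : (fun z => if F z = 0 then deriv G z / deriv F z else G z / F z)
          =ᶠ[𝓝 z₀] fun z => G z / F z := by
        filter_upwards [(hF z₀).continuousAt.eventually_ne h0] with z hz
        rw [if_neg hz]
      exact (Filter.EventuallyEq.differentiableAt_iff hev).2 ((hG z₀).div (hF z₀) h0)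
  · intro z
    by_cases h : F z = 0
    · simp [h, hv z h]
    · simp only [if_neg h]; field_simp

/-- Division by a finite product of linear factors. -/
lemma aux_div_finset (T : Finset ℂ) : ∀ (G : ℂ → ℂ), Differentiable ℂ G → (∀ q ∈ T, G q = 0) →
    ∃ H : ℂ → ℂ, Differentiable ℂ H ∧ ∀ z, G z = (∏ q ∈ T, (z - q)) * H z := by
  classical
  induction T using Finset.induction_on with
  | empty => exact fun G hG _ => ⟨G, hG, fun z => by simp⟩
  | @insert q T hq ih =>
    intro G hG hv
    have hlin : Differentiable ℂ (fun z : ℂ => z - q) := by fun_prop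
    have hds : ∀ z : ℂ, (fun z : ℂ => z - q) z = 0 → deriv (fun z : ℂ => z - q) z ≠ 0 := by
      intro z _
      have : deriv (fun z : ℂ => z - q) z = 1 := by
        simp [deriv_sub_const]
      simp [this]
    have hvz : ∀ z : ℂ, (fun z : ℂ => z - q) z = 0 → G z = 0 := by
      intro z hz
      have : z = q := by simpa [sub_eq_zero] using hz
      exact this ▸ hv q (Finset.mem_insert_self q T)
    obtain ⟨H1, hH1, he1⟩ := aux_div_simple hlin hG hds hvz
    have hvT : ∀ q' ∈ T, H1 q' = 0 := by
      intro q' hq'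
      have h0 : G q' = 0 := hv q' (Finset.mem_insert_of_mem hq')
      rw [he1 q'] at h0
      rcases mul_eq_zero.1 h0 with h | h
      · exact absurd (sub_eq_zero.1 h) (fun hh => hq (hh ▸ hq'))
      · exact h
    obtain ⟨H, hH, he⟩ := ih H1 hH1 hvT
    refine ⟨H, hH, fun z => ?_⟩
    rw [he1 z, he z, Finset.prod_insert hq]
    ring

abbrev OuterDisk : Set ℂ := {z : ℂ | 1 < ‖z‖}

lemma aux_outer_open : IsOpen OuterDisk := isOpen_lt continuous_const continuous_norm

lemma aux_diffOn {f : ℂ → ℂ} (hf : Differentiable ℂ f) (k : ℤ) :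
    DifferentiableOn ℂ (fun z : ℂ => z ^ k * f z) OuterDisk := by
  intro z hz
  have hz0 : z ≠ 0 := by
    intro h; rw [h] at hz; simp only [OuterDisk, mem_setOf_eq, norm_zero] at hz; linarith
  exact ((differentiableAt_zpow.mpr (Or.inl hz0)).mul (hf z)).differentiableWithinAt

lemma aux_analyticOn {F G : ℂ → ℂ} (hF : Differentiable ℂ F) (hG : Differentiable ℂ G) (k : ℤ) :
    AnalyticOn ℂ (fun z : ℂ => z ^ k * F z * G z) OuterDisk := by
  have h : (fun z : ℂ => z ^ k * F z * G z) = fun z : ℂ => z ^ k * (F z * G z) := by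
    funext z; ring
  rw [h]
  exact (aux_diffOn (hF.mul hG) k).analyticOn aux_outer_open

lemma aux_contOn {F G : ℂ → ℂ} (hF : Differentiable ℂ F) (hG : Differentiable ℂ G) (k : ℤ) :
    ContinuousOn (fun z : ℂ =>
      ‖z ^ k * F z * G z‖ ^ 2 * Real.exp (-Real.pi * ‖z‖ ^ 2))
      OuterDisk := by
  have h : (fun z : ℂ => z ^ k * F z * G z) = fun z : ℂ => z ^ k * (F z * G z) := by
    funext z; ring
  have h1 : ContinuousOn (fun z : ℂ => z ^ k * F z * G z) OuterDisk := by
    rw [h]; exact (aux_diffOn (hF.mul hG) k).continuousOn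
  have h2 : Continuous fun z : ℂ => Real.exp (-Real.pi * ‖z‖ ^ 2) :=
    Real.continuous_exp.comp (continuous_const.mul (continuous_norm.pow 2))
  exact ((continuous_norm.comp_continuousOn h1).pow 2).mul h2.continuousOn

/-- Domination principle for integrability on a measurable set. -/
lemma aux_int_dom {S : Set ℂ} (hS : MeasurableSet S) {f g : ℂ → ℝ} (hg : IntegrableOn g S)
    (hfc : ContinuousOn f S) (h0 : ∀ z ∈ S, 0 ≤ f z) (hb : ∀ z ∈ S, f z ≤ g z) :
    IntegrableOn f S := by
  apply Integrable.mono' hg (hfc.aestronglyMeasurable hS)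
  rw [ae_restrict_iff' hS]
  exact ae_of_all _ fun z hz => by
    rw [Real.norm_eq_abs, _root_.abs_of_nonneg (h0 z hz)]; exact hb z hz

lemma aux_gauss : Integrable (fun z : ℂ => Real.exp (-(Real.pi - 1) * ‖z‖ ^ 2)) := by
  have hb : (0:ℝ) < ((Real.pi - 1 : ℝ) : ℂ).re := by
    simp; linarith [Real.pi_gt_three]
  have h := (GaussianFourier.integrable_cexp_neg_mul_sq_norm_add (V := ℂ) hb 0 0).norm
  simp only [Complex.norm_exp, zero_mul, add_zero,
    ← Complex.ofReal_pow, ← Complex.ofReal_neg, ← Complex.ofReal_mul, Complex.ofReal_re] at h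
  simpa using h

lemma aux_pow_le_exp (K : ℕ) {x : ℝ} (hx : 0 ≤ x) : x ^ K ≤ (K.factorial : ℝ) * Real.exp x := by
  have h1 : x ^ K / (K.factorial : ℝ) ≤ Real.exp x := by
    calc x ^ K / (K.factorial : ℝ) ≤ ∑ i ∈ Finset.range (K + 1), x ^ i / i.factorial := by
          refine Finset.single_le_sum (f := fun i => x ^ i / (i.factorial : ℝ)) ?_ ?_
          · intro i _; positivity
          · exact Finset.self_mem_range_succ K
      _ ≤ Real.exp x := Real.sum_le_exp_of_nonneg hx _
  calc x ^ K = (x ^ K / (K.factorial : ℝ)) * K.factorial := by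
        field_simp
    _ ≤ Real.exp x * K.factorial := by
        apply mul_le_mul_of_nonneg_right h1 (by positivity)
    _ = (K.factorial : ℝ) * Real.exp x := by ring

/-- Integrability of polynomial-type weights against the Gaussian on the outer disk. -/
lemma aux_int_polygauss (C : ℝ) (j : ℤ) :
    IntegrableOn (fun z : ℂ => C * (‖z‖ ^ j * Real.exp (-Real.pi * ‖z‖ ^ 2)))
      OuterDisk := by
  set K : ℕ := j.toNat
  have hbound : ∀ z ∈ OuterDisk,
      ‖z‖ ^ j * Real.exp (-Real.pi * ‖z‖ ^ 2)
        ≤ (K.factorial : ℝ) * Real.exp (-(Real.pi - 1) * ‖z‖ ^ 2) := by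
    intro z hz
    have ha : (1:ℝ) < ‖z‖ := hz
    have ha0 : (0:ℝ) < ‖z‖ := lt_trans one_pos ha
    have h1 : ‖z‖ ^ j ≤ ‖z‖ ^ (K:ℤ) := by
      apply zpow_le_zpow_right₀ (le_of_lt ha)
      exact Int.self_le_toNat j
    have h2 : ‖z‖ ^ (K:ℤ) = ‖z‖ ^ K := zpow_natCast _ K
    have h3 : ‖z‖ ^ K ≤ (K.factorial : ℝ) * Real.exp (‖z‖ ^ 2) := by
      calc ‖z‖ ^ K ≤ (‖z‖ ^ 2) ^ K := by
            apply pow_le_pow_left₀ (le_of_lt ha0)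
            nlinarith
        _ ≤ (K.factorial : ℝ) * Real.exp (‖z‖ ^ 2) := aux_pow_le_exp K (by positivity)
    calc ‖z‖ ^ j * Real.exp (-Real.pi * ‖z‖ ^ 2)
        ≤ ((K.factorial : ℝ) * Real.exp (‖z‖ ^ 2)) *
            Real.exp (-Real.pi * ‖z‖ ^ 2) := by
          apply mul_le_mul_of_nonneg_right _ (Real.exp_nonneg _)
          rw [← h2] at h3
          exact le_trans h1 h3
      _ = (K.factorial : ℝ) * Real.exp (-(Real.pi - 1) * ‖z‖ ^ 2) := by
          rw [mul_assoc, ← Real.exp_add]; ring_nf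
  have hcont : ContinuousOn
      (fun z : ℂ => C * (‖z‖ ^ j * Real.exp (-Real.pi * ‖z‖ ^ 2)))
      OuterDisk := by
    apply ContinuousOn.mul continuousOn_const
    apply ContinuousOn.mul
    · exact (continuous_norm.continuousOn (s := OuterDisk)).zpow₀ j
        (fun z hz => Or.inl (by
          have : (1:ℝ) < ‖z‖ := hz
          positivity))
    · exact (Real.continuous_exp.comp
        (continuous_const.mul (continuous_norm.pow 2))).continuousOn
  have hgauss : IntegrableOn
      (fun z : ℂ => (|C| * K.factorial) * Real.exp (-(Real.pi - 1) * ‖z‖ ^ 2))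
      OuterDisk := ((aux_gauss.const_mul _).integrableOn)
  apply Integrable.mono' hgauss (hcont.aestronglyMeasurable aux_outer_open.measurableSet)
  rw [ae_restrict_iff' aux_outer_open.measurableSet]
  refine ae_of_all _ fun z hz => ?_
  have ha : (1:ℝ) < ‖z‖ := hz
  have ha0 : (0:ℝ) < ‖z‖ := lt_trans one_pos ha
  have h := hbound z hz
  have hnn : (0:ℝ) ≤ ‖z‖ ^ j * Real.exp (-Real.pi * ‖z‖ ^ 2) := by positivity
  rw [Real.norm_eq_abs, abs_mul, _root_.abs_of_nonneg hnn, mul_assoc]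
  apply mul_le_mul_of_nonneg_left _ (abs_nonneg C)
  exact le_trans h (by
    apply mul_le_mul_of_nonneg_right _ (Real.exp_nonneg _)
    exact le_refl _)

/-- Bounds on finsets of complex numbers. -/
lemma aux_finset_bound (T : Finset ℂ) : ∃ B : ℝ, 1 ≤ B ∧ ∀ q ∈ T, ‖q‖ ≤ B := by
  obtain ⟨b, hb⟩ := (T.finite_toSet.image (fun x : ℂ => ‖x‖)).bddAbove
  exact ⟨max b 1, le_max_right _ _, fun q hq =>
    le_trans (hb (mem_image_of_mem _ hq)) (le_max_left _ _)⟩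

/-- The minimality witness. -/
lemma aux_witness {F G₀ : ℂ → ℂ} (hF : Differentiable ℂ F) (hG₀d : Differentiable ℂ G₀)
    (hG₀ne : G₀ ≠ 0) (hFne : ∃ w, F w ≠ 0) {N : ℤ}
    (hW : MemF0 (fun z : ℂ => z ^ N * F z * G₀ z))
    (T₂ S₂ : Finset ℂ) (hT₂ : ∀ q ∈ T₂, F q = 0) (hS₂ : ∀ p ∈ S₂, ‖p‖ < 1/2)
    (hcard : (S₂.card : ℤ) - T₂.card = N) :
    ∃ Ψ : ℂ → ℂ, MemFock Ψ ∧ Ψ ≠ 0 ∧ (∀ w, F w = 0 → w ∉ T₂ → Ψ w = 0) ∧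
      ∀ p ∈ S₂, Ψ p = 0 := by
  classical
  obtain ⟨F', hF'd, hF'e⟩ := aux_div_finset T₂ F hF hT₂
  set Ψ : ℂ → ℂ := fun z => F' z * G₀ z * ∏ p ∈ S₂, (z - p) with hΨdef
  have hprodS : Differentiable ℂ (fun z : ℂ => ∏ p ∈ S₂, (z - p)) := by
    apply Differentiable.fun_finsetProd; intro p _; fun_prop
  have hΨd : Differentiable ℂ Ψ := ((hF'd.mul hG₀d).mul hprodS)
  obtain ⟨B₂, hB₂1, hB₂⟩ := aux_finset_bound T₂
  set R : ℝ := 2 * B₂ + 2 with hRdef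
  have hR1 : 1 < R := by linarith
  -- key pointwise bound outside the ball of radius R
  set C₁ : ℝ := 2 ^ (S₂.card + T₂.card) with hC₁def
  have hkey : ∀ z : ℂ, R < ‖z‖ →
      ‖Ψ z‖ ≤ C₁ * ‖z ^ N * F z * G₀ z‖ := by
    intro z hz
    set a : ℝ := ‖z‖ with hadef
    have ha1 : 1 < a := lt_trans hR1 hz
    have ha0 : 0 < a := lt_trans one_pos ha1
    have hzT : ∀ q ∈ T₂, a / 2 ≤ ‖z - q‖ := by
      intro q hq
      have h1 : a - ‖q‖ ≤ ‖z - q‖ := by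
        have := norm_sub_norm_le z q
        simpa using this
      have h2 : ‖q‖ ≤ B₂ := hB₂ q hq
      have : B₂ ≤ a / 2 := by
        rw [hRdef] at hz; linarith
      linarith
    have hzS : ∀ p ∈ S₂, ‖z - p‖ ≤ 2 * a := by
      intro p hp
      have h1 : ‖z - p‖ ≤ a + ‖p‖ := by
        have := norm_sub_le z p
        simpa using this
      have h2 : ‖p‖ < 1/2 := hS₂ p hp
      linarith
    have hident : Ψ z * ∏ q ∈ T₂, (z - q) = F z * G₀ z * ∏ p ∈ S₂, (z - p) := by
      rw [hΨdef, hF'e z]; ring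
    have habs : ‖Ψ z‖ * ∏ q ∈ T₂, ‖z - q‖
        = ‖F z * G₀ z‖ * ∏ p ∈ S₂, ‖z - p‖ := by
      have h2 := congrArg (fun x : ℂ => ‖x‖) hident
      simp only [hΨdef, norm_mul, norm_prod] at h2 ⊢
      linear_combination h2
    have hTlow : (a/2) ^ T₂.card ≤ ∏ q ∈ T₂, ‖z - q‖ := by
      rw [← Finset.prod_const]
      exact Finset.prod_le_prod (fun q _ => by positivity) hzT
    have hSup : ∏ p ∈ S₂, ‖z - p‖ ≤ (2*a) ^ S₂.card := by
      rw [← Finset.prod_const]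
      exact Finset.prod_le_prod (fun p _ => norm_nonneg _) hzS
    have hpos : (0:ℝ) < (a/2) ^ T₂.card := by positivity
    rw [← mul_le_mul_iff_of_pos_right hpos]
    have step1 : ‖Ψ z‖ * (a/2) ^ T₂.card
        ≤ ‖F z * G₀ z‖ * (2*a) ^ S₂.card := by
      calc ‖Ψ z‖ * (a/2) ^ T₂.card
          ≤ ‖Ψ z‖ * ∏ q ∈ T₂, ‖z - q‖ :=
            mul_le_mul_of_nonneg_left hTlow (norm_nonneg _)
        _ = ‖F z * G₀ z‖ * ∏ p ∈ S₂, ‖z - p‖ := habs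
        _ ≤ ‖F z * G₀ z‖ * (2*a) ^ S₂.card :=
            mul_le_mul_of_nonneg_left hSup (norm_nonneg _)
    have step2 : C₁ * ‖z ^ N * F z * G₀ z‖ * (a/2) ^ T₂.card
        = ‖F z * G₀ z‖ * (2*a) ^ S₂.card := by
      have habs2 : ‖z ^ N * F z * G₀ z‖
          = a ^ N * ‖F z * G₀ z‖ := by
        rw [mul_assoc, norm_mul, norm_zpow]
      rw [habs2]
      have haN : a ^ N = a ^ S₂.card / a ^ T₂.card := by
        rw [show N = (S₂.card : ℤ) - (T₂.card : ℤ) from hcard.symm, zpow_sub₀ (ne_of_gt ha0),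
          zpow_natCast, zpow_natCast]
      rw [haN, hC₁def, pow_add]
      field_simp
      have h2 : ((1:ℝ)/2) ^ T₂.card * 2 ^ T₂.card = 1 := by rw [← mul_pow]; norm_num
      linear_combination (a ^ S₂.card * a ^ T₂.card * ‖F z * G₀ z‖ * 2 ^ S₂.card) * h2
    rw [← step2] at step1
    exact step1
  refine ⟨Ψ, ⟨hΨd, ?_⟩, ?_, ?_, ?_⟩
  · -- integrability over ℂ
    have hcont : Continuous
        (fun z : ℂ => ‖Ψ z‖ ^ 2 * Real.exp (-Real.pi * ‖z‖ ^ 2)) := by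
      apply Continuous.mul
      · exact (continuous_norm.comp hΨd.continuous).pow 2
      · exact Real.continuous_exp.comp (continuous_const.mul (continuous_norm.pow 2))
    have hball : IntegrableOn
        (fun z : ℂ => ‖Ψ z‖ ^ 2 * Real.exp (-Real.pi * ‖z‖ ^ 2))
        (Metric.closedBall (0:ℂ) R) :=
      hcont.continuousOn.integrableOn_compact (isCompact_closedBall _ _)
    have houtset : {z : ℂ | R < ‖z‖} ⊆ OuterDisk := by
      intro z hz
      exact lt_trans hR1 hz
    have houtmeas : MeasurableSet {z : ℂ | R < ‖z‖} :=
      (isOpen_lt continuous_const continuous_norm).measurableSet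
    have hdom : IntegrableOn
        (fun z : ℂ => C₁ ^ 2 *
          (‖z ^ N * F z * G₀ z‖ ^ 2 * Real.exp (-Real.pi * ‖z‖ ^ 2)))
        {z : ℂ | R < ‖z‖} :=
      ((hW.2.mono_set houtset).const_mul (C₁ ^ 2))
    have hout : IntegrableOn
        (fun z : ℂ => ‖Ψ z‖ ^ 2 * Real.exp (-Real.pi * ‖z‖ ^ 2))
        {z : ℂ | R < ‖z‖} := by
      apply aux_int_dom houtmeas hdom hcont.continuousOn
      · intro z _; positivity
      · intro z hz
        have h := hkey z hz
        have h2 : ‖Ψ z‖ ^ 2 ≤ (C₁ * ‖z ^ N * F z * G₀ z‖) ^ 2 :=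
          pow_le_pow_left₀ (norm_nonneg _) h 2
        calc ‖Ψ z‖ ^ 2 * Real.exp (-Real.pi * ‖z‖ ^ 2)
            ≤ (C₁ * ‖z ^ N * F z * G₀ z‖) ^ 2 *
              Real.exp (-Real.pi * ‖z‖ ^ 2) :=
              mul_le_mul_of_nonneg_right h2 (Real.exp_nonneg _)
          _ = C₁ ^ 2 * (‖z ^ N * F z * G₀ z‖ ^ 2 *
              Real.exp (-Real.pi * ‖z‖ ^ 2)) := by ring
    rw [← integrableOn_univ]
    apply (hball.union hout).mono_set
    intro z _
    rcases le_or_gt (‖z‖) R with h | h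
    · exact Or.inl (by simpa [Metric.mem_closedBall, Complex.dist_eq] using h)
    · exact Or.inr h
  · -- Ψ ≠ 0
    intro hΨ0
    have hUopen : IsOpen ({z : ℂ | F z ≠ 0} \ ↑(T₂ ∪ S₂)) :=
      (isOpen_compl_iff.2 (isClosed_eq hF.continuous continuous_const)).sdiff
        (T₂ ∪ S₂).finite_toSet.isClosed
    have hUne : ({z : ℂ | F z ≠ 0} \ ↑(T₂ ∪ S₂)).Nonempty := by
      apply Set.Infinite.nonempty
      apply Set.Infinite.diff _ (T₂ ∪ S₂).finite_toSet
      apply aux_open_infinite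
        (isOpen_compl_iff.2 (isClosed_eq hF.continuous continuous_const)) hFne
    apply hG₀ne
    apply aux_eq_zero_of_zero_on_open hG₀d hUopen hUne
    intro w hw
    have hΨw : Ψ w = 0 := by rw [hΨ0]; rfl
    have hF'w : F' w ≠ 0 := by
      intro h0
      exact hw.1 (by rw [hF'e w, h0, mul_zero])
    have hprodw : (∏ p ∈ S₂, (w - p)) ≠ 0 := by
      rw [Finset.prod_ne_zero_iff]
      intro p hp
      have : w ≠ p := by
        intro hh
        exact hw.2 (by simp [hh, Finset.mem_union, hp])
      exact sub_ne_zero.2 this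
    rw [hΨdef] at hΨw
    simp only at hΨw
    rcases mul_eq_zero.1 hΨw with h | h
    · rcases mul_eq_zero.1 h with h | h
      · exact absurd h hF'w
      · exact h
    · exact absurd h hprodw
  · -- vanishing at remaining zeros of F
    intro w hFw hwT
    have hprodT : (∏ q ∈ T₂, (w - q)) ≠ 0 := by
      rw [Finset.prod_ne_zero_iff]
      intro q hq
      exact sub_ne_zero.2 (fun hh => hwT (hh ▸ hq))
    have : F' w = 0 := by
      have h := hF'e w
      rw [hFw] at h
      rcases mul_eq_zero.1 h.symm with h | h
      · exact absurd h hprodT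
      · exact h
    rw [hΨdef]; simp [this]
  · -- vanishing on S₂
    intro p hp
    rw [hΨdef]
    simp only
    rw [Finset.prod_eq_zero hp (sub_self p), mul_zero]

/-- Lemma 1: if F is entire with simple zeros, z^m F ∈ F₀ and z^n F G ∉ F₀ for every
nonzero entire G, then adding/removing finitely many points to/from the zero set of F
yields Λ such that {k_λ}_{λ∈Λ} is complete and minimal in the Fock space (i.e. Λ is a
uniqueness set but Λ \ {λ} never is). -/
theorem stmt14 (F : ℂ → ℂ) (hF : Differentiable ℂ F)
    (hsimple : ∀ z : ℂ, F z = 0 → deriv F z ≠ 0)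
    (m n : ℤ)
    (hm : MemF0 (fun z : ℂ => z ^ m * F z))
    (hn : ∀ G : ℂ → ℂ, Differentiable ℂ G → G ≠ 0 →
      ¬ MemF0 (fun z : ℂ => z ^ n * F z * G z)) :
    ∃ Λ : Set ℂ,
      (Λ \ {z : ℂ | F z = 0}).Finite ∧ ({z : ℂ | F z = 0} \ Λ).Finite ∧
      (∀ G : ℂ → ℂ, MemFock G → (∀ l ∈ Λ, G l = 0) → G = 0) ∧
      (∀ l ∈ Λ, ∃ G : ℂ → ℂ, MemFock G ∧ G ≠ 0 ∧ ∀ μ ∈ Λ \ {l}, G μ = 0) := by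
  classical
  -- F is not identically zero
  have hFne : ∃ w, F w ≠ 0 := by
    by_contra h
    push_neg at h
    have h1 : F = fun _ => 0 := funext h
    have h2 : deriv F 0 = 0 := by rw [h1]; simp
    exact hsimple 0 (h 0) h2
  -- the set B of admissible exponents
  set B : ℤ → Prop := fun k => ∃ G : ℂ → ℂ, Differentiable ℂ G ∧ G ≠ 0 ∧
    MemF0 (fun z : ℂ => z ^ k * F z * G z) with hBdef
  have hBm : B m := by
    refine ⟨fun _ => 1, differentiable_const 1, ?_, ?_⟩
    · intro h
      have := congrFun h 0
      simp at this
    · simpa only [mul_one] using hm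
  have hBub : ∀ k : ℤ, B k → k ≤ n - 1 := by
    intro k hk
    by_contra hlt
    push_neg at hlt
    have hkn : n ≤ k := by omega
    obtain ⟨G, hGd, hGne, hGF⟩ := hk
    set j : ℕ := (k - n).toNat with hjdef
    have hj : (j : ℤ) = k - n := Int.toNat_of_nonneg (by omega)
    set G' : ℂ → ℂ := fun z => z ^ j * G z with hG'def
    have hG'd : Differentiable ℂ G' := by fun_prop
    have hG'ne : G' ≠ 0 := by
      intro h
      apply hGne
      apply aux_eq_zero_of_zero_on_open hGd (U := {z : ℂ | z ≠ 0}) isOpen_ne ⟨1, by simp⟩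
      intro z hz
      have h2 := congrFun h z
      simp only [hG'def, Pi.zero_apply] at h2
      rcases mul_eq_zero.1 h2 with h' | h'
      · exact absurd (pow_eq_zero_iff'.1 h').1 hz
      · exact h'
    apply hn G' hG'd hG'ne
    constructor
    · exact aux_analyticOn hF hG'd n
    · apply hGF.2.congr_fun _ aux_outer_open.measurableSet
      intro z hz
      have hz1 : (1:ℝ) < ‖z‖ := hz
      have hz0 : z ≠ 0 := by
        intro h; rw [h] at hz1; simp at hz1; linarith
      have heq : z ^ k * F z * G z = z ^ n * F z * G' z := by
        rw [hG'def]
        simp only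
        rw [← zpow_natCast z j, hj]
        rw [show (k:ℤ) = n + (k - n) by ring, zpow_add₀ hz0]
        ring
      simp only [heq]
  obtain ⟨N, hBN, hNmax⟩ := Int.exists_greatest_of_bdd ⟨n - 1, hBub⟩ ⟨m, hBm⟩
  obtain ⟨G₀, hG₀d, hG₀ne, hG₀F⟩ := hBN
  have hn' : ∀ k : ℤ, N < k → ∀ G : ℂ → ℂ, Differentiable ℂ G → G ≠ 0 →
      ¬ MemF0 (fun z : ℂ => z ^ k * F z * G z) := by
    intro k hk G h1 h2 h3
    have : k ≤ N := hNmax k ⟨G, h1, h2, h3⟩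
    omega
  -- the zero set of F is infinite
  have hZinf : {z : ℂ | F z = 0}.Infinite := by
    by_contra hfin
    rw [Set.not_infinite] at hfin
    set Tz : Finset ℂ := hfin.toFinset with hTzdef
    have hvz : ∀ q ∈ Tz, F q = 0 := fun q hq => hfin.mem_toFinset.1 hq
    obtain ⟨F₁, hF₁d, hF₁e⟩ := aux_div_finset Tz F hF hvz
    have hprodTz : Differentiable ℂ (fun z : ℂ => ∏ q ∈ Tz, (z - q)) := by
      apply Differentiable.fun_finsetProd; intro q _; fun_prop
    have hF₁ne : ∀ z, F₁ z ≠ 0 := by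
      intro z hz0
      by_cases hFz : F z = 0
      · have hzT : z ∈ Tz := hfin.mem_toFinset.2 hFz
        have hFfun : F = fun w => (∏ q ∈ Tz, (w - q)) * F₁ w := funext hF₁e
        have hd : deriv F z = 0 := by
          rw [hFfun, deriv_fun_mul (hprodTz z) (hF₁d z)]
          have hP : (∏ q ∈ Tz, (z - q)) = 0 := Finset.prod_eq_zero hzT (sub_self z)
          rw [hP, hz0]; ring
        exact hsimple z hFz hd
      · exact hFz (by rw [hF₁e z, hz0, mul_zero])
    set G₂ : ℂ → ℂ := fun z => (F₁ z)⁻¹ with hG₂def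
    have hG₂d : Differentiable ℂ G₂ := hF₁d.inv hF₁ne
    have hG₂ne : G₂ ≠ 0 := by
      intro h
      have h2 := congrFun h 0
      simp only [hG₂def, Pi.zero_apply, inv_eq_zero] at h2
      exact hF₁ne 0 h2
    apply hn' (N + 1) (by omega) G₂ hG₂d hG₂ne
    obtain ⟨B₁, hB₁1, hB₁⟩ := aux_finset_bound Tz
    constructor
    · exact aux_analyticOn hF hG₂d (N + 1)
    · apply aux_int_dom aux_outer_open.measurableSet
        (aux_int_polygauss ((1 + B₁) ^ (2 * Tz.card)) (2 * (N + 1) + 2 * Tz.card))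
        (aux_contOn hF hG₂d (N + 1))
      · intro z _; positivity
      · intro z hz
        have ha1 : (1:ℝ) < ‖z‖ := hz
        have ha0 : (0:ℝ) < ‖z‖ := lt_trans one_pos ha1
        set a : ℝ := ‖z‖ with hadef
        have hane : a ≠ 0 := ne_of_gt ha0
        have hFG : F z * G₂ z = ∏ q ∈ Tz, (z - q) := by
          rw [hG₂def]
          simp only
          rw [hF₁e z, mul_assoc, mul_inv_cancel₀ (hF₁ne z), mul_one]
        have habs : ‖z ^ (N+1) * F z * G₂ z‖
            = a ^ (N+1) * ∏ q ∈ Tz, ‖z - q‖ := by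
          rw [mul_assoc, norm_mul, norm_zpow, hFG, norm_prod]
        have hprodb : ∏ q ∈ Tz, ‖z - q‖ ≤ ((1 + B₁) * a) ^ Tz.card := by
          rw [← Finset.prod_const]
          apply Finset.prod_le_prod (fun q _ => norm_nonneg _)
          intro q hq
          have h1 : ‖z - q‖ ≤ a + ‖q‖ := by
            have := norm_sub_le z q
            simpa using this
          have h2 : ‖q‖ ≤ B₁ := hB₁ q hq
          nlinarith
        have e2 : (a ^ (N+1) * ((1 + B₁) * a) ^ Tz.card) ^ 2
            = (1 + B₁) ^ (2 * Tz.card) * a ^ (2 * (N + 1) + 2 * (Tz.card : ℤ)) := by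
          rw [mul_pow (1 + B₁) a Tz.card]
          rw [show (2 * (N + 1) + 2 * (Tz.card : ℤ))
              = ((N+1) + (N+1)) + ((Tz.card : ℤ) + (Tz.card : ℤ)) by ring]
          simp only [zpow_add₀ hane, zpow_natCast, zpow_one]
          ring
        calc ‖z ^ (N+1) * F z * G₂ z‖ ^ 2 * Real.exp (-Real.pi * a ^ 2)
            ≤ (a ^ (N+1) * ((1 + B₁) * a) ^ Tz.card) ^ 2 * Real.exp (-Real.pi * a ^ 2) := by
              apply mul_le_mul_of_nonneg_right _ (Real.exp_nonneg _)
              apply pow_le_pow_left₀ (norm_nonneg _)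
              rw [habs]
              apply mul_le_mul_of_nonneg_left hprodb (le_of_lt (zpow_pos ha0 _))
          _ = (1 + B₁) ^ (2 * Tz.card) *
              (a ^ (2 * (N + 1) + 2 * (Tz.card : ℤ)) * Real.exp (-Real.pi * a ^ 2)) := by
              rw [e2]; ring
  -- choice of the finite modification sets
  set s' : ℕ := (N+1).toNat with hs'def
  set t' : ℕ := (-(N+1)).toNat with ht'def
  have hst : (s' : ℤ) - t' = N + 1 := by omega
  obtain ⟨Tf, hTfsub, hTfcard⟩ := hZinf.exists_subset_card_eq t'
  have hVopen : IsOpen {z : ℂ | ‖z‖ < 1/2 ∧ F z ≠ 0} := by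
    have h1 : IsOpen {z : ℂ | ‖z‖ < 1/2} :=
      isOpen_lt continuous_norm continuous_const
    have h2 : IsOpen {z : ℂ | F z ≠ 0} :=
      isOpen_compl_iff.2 (isClosed_eq hF.continuous continuous_const)
    exact h1.inter h2
  have hVne : {z : ℂ | ‖z‖ < 1/2 ∧ F z ≠ 0}.Nonempty := by
    by_contra hV
    push_neg at hV
    simp only [Set.not_nonempty_iff_eq_empty, Set.eq_empty_iff_forall_notMem,
      mem_setOf_eq, not_and, not_not] at hV
    have h0 : F 0 = 0 := hV 0 (by simp)
    have hd : deriv F 0 = 0 := by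
      have hev : F =ᶠ[𝓝 0] fun _ => 0 := by
        filter_upwards [Metric.ball_mem_nhds (0:ℂ) (by norm_num : (0:ℝ) < 1/2)] with z hz
        exact hV z (by simpa [Complex.dist_eq] using hz)
      rw [hev.deriv_eq]; simp
    exact hsimple 0 h0 hd
  obtain ⟨Sf, hSfsub, hSfcard⟩ := (aux_open_infinite hVopen hVne).exists_subset_card_eq s'
  set Λ : Set ℂ := ({z : ℂ | F z = 0} \ ↑Tf) ∪ ↑Sf with hΛdef
  refine ⟨Λ, ?_, ?_, ?_, ?_⟩
  · -- Λ \ Z finite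
    apply Sf.finite_toSet.subset
    intro z hz
    rcases hz.1 with h | h
    · exact absurd h.1 hz.2
    · exact h
  · -- Z \ Λ finite
    apply Tf.finite_toSet.subset
    intro z hz
    by_contra hzT
    exact hz.2 (Or.inl ⟨hz.1, hzT⟩)
  · -- completeness
    intro G hGF hvan
    by_contra hGne0
    have hGd := hGF.1
    set G₁ : ℂ → ℂ := fun z => G z * ∏ q ∈ Tf, (z - q) with hG₁def
    have hG₁d : Differentiable ℂ G₁ :=
      hGd.mul (Differentiable.fun_finsetProd fun q _ => by fun_prop)
    have hG₁v : ∀ z, F z = 0 → G₁ z = 0 := by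
      intro z hz
      by_cases hzT : z ∈ Tf
      · rw [hG₁def]; simp only
        rw [Finset.prod_eq_zero hzT (sub_self z), mul_zero]
      · have hzΛ : z ∈ Λ := Or.inl ⟨hz, fun hh => hzT (Finset.mem_coe.1 hh)⟩
        rw [hG₁def]; simp only
        rw [hvan z hzΛ, zero_mul]
    obtain ⟨H₁, hH₁d, hH₁e⟩ := aux_div_simple hF hG₁d hsimple hG₁v
    have hH₁v : ∀ p ∈ Sf, H₁ p = 0 := by
      intro p hp
      have hFp : F p ≠ 0 := (hSfsub (Finset.mem_coe.2 hp)).2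
      have h1 : G₁ p = 0 := by
        rw [hG₁def]; simp only
        rw [hvan p (Or.inr (Finset.mem_coe.2 hp)), zero_mul]
      have h2 := hH₁e p
      rw [h1] at h2
      rcases mul_eq_zero.1 h2.symm with h | h
      · exact absurd h hFp
      · exact h
    obtain ⟨H₂, hH₂d, hH₂e⟩ := aux_div_finset Sf H₁ hH₁d hH₁v
    have hH₂ne : H₂ ≠ 0 := by
      intro h0
      apply hGne0
      apply aux_eq_zero_of_zero_on_open hGd (U := (↑Tf : Set ℂ)ᶜ)
        Tf.finite_toSet.isClosed.isOpen_compl Tf.finite_toSet.infinite_compl.nonempty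
      intro z hz
      have h1 := hH₁e z
      rw [hH₂e z, h0] at h1
      simp only [Pi.zero_apply, mul_zero] at h1
      rw [hG₁def] at h1
      simp only at h1
      rcases mul_eq_zero.1 h1 with h | h
      · exact h
      · exact absurd h (Finset.prod_ne_zero_iff.2 fun q hq =>
          sub_ne_zero.2 (fun hh => hz (Finset.mem_coe.2 (hh ▸ hq))))
    apply hn' (N+1) (by omega) H₂ hH₂d hH₂ne
    obtain ⟨B₁, hB₁1, hB₁⟩ := aux_finset_bound Tf
    set C₀ : ℝ := (1 + B₁) ^ t' * 2 ^ s' with hC₀def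
    constructor
    · exact aux_analyticOn hF hH₂d (N+1)
    · apply aux_int_dom aux_outer_open.measurableSet
        ((hGF.2.const_mul (C₀ ^ 2)).integrableOn)
        (aux_contOn hF hH₂d (N+1))
      · intro z _; positivity
      · intro z hz
        have ha1 : (1:ℝ) < ‖z‖ := hz
        have ha0 : (0:ℝ) < ‖z‖ := lt_trans one_pos ha1
        set a : ℝ := ‖z‖ with hadef
        have hane : a ≠ 0 := ne_of_gt ha0
        have hident : F z * H₂ z * ∏ p ∈ Sf, (z - p) = G z * ∏ q ∈ Tf, (z - q) := by
          have h1 := hH₁e z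
          rw [hH₂e z] at h1
          rw [hG₁def] at h1
          simp only at h1
          linear_combination -h1
        have habs : ‖F z * H₂ z‖ * ∏ p ∈ Sf, ‖z - p‖
            = ‖G z‖ * ∏ q ∈ Tf, ‖z - q‖ := by
          have h2 := congrArg (fun x : ℂ => ‖x‖) hident
          simp only [norm_mul, norm_prod] at h2 ⊢
          linear_combination h2
        have hSlow : (a/2) ^ s' ≤ ∏ p ∈ Sf, ‖z - p‖ := by
          rw [← hSfcard, ← Finset.prod_const]
          apply Finset.prod_le_prod (fun p _ => by positivity)
          intro p hp
          have h1 : a - ‖p‖ ≤ ‖z - p‖ := by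
            have := norm_sub_norm_le z p
            simpa using this
          have h2 : ‖p‖ < 1/2 := (hSfsub (Finset.mem_coe.2 hp)).1
          linarith
        have hTup : ∏ q ∈ Tf, ‖z - q‖ ≤ ((1 + B₁) * a) ^ t' := by
          rw [← hTfcard, ← Finset.prod_const]
          apply Finset.prod_le_prod (fun q _ => norm_nonneg _)
          intro q hq
          have h1 : ‖z - q‖ ≤ a + ‖q‖ := by
            have := norm_sub_le z q
            simpa using this
          have h2 : ‖q‖ ≤ B₁ := hB₁ q hq
          nlinarith
        have hmain : ‖z ^ (N+1) * F z * H₂ z‖ ≤ C₀ * ‖G z‖ := by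
          have hpos : (0:ℝ) < (a/2) ^ s' := by positivity
          rw [← mul_le_mul_iff_of_pos_right hpos]
          have hXabs : ‖z ^ (N+1) * F z * H₂ z‖
              = a ^ (N+1) * ‖F z * H₂ z‖ := by
            rw [mul_assoc, norm_mul, norm_zpow]
          have step1 : a ^ (N+1) * ‖F z * H₂ z‖ * (a/2) ^ s'
              ≤ a ^ (N+1) * (‖G z‖ * ((1 + B₁) * a) ^ t') := by
            rw [mul_assoc]
            apply mul_le_mul_of_nonneg_left _ (le_of_lt (zpow_pos ha0 _))
            calc ‖F z * H₂ z‖ * (a/2) ^ s'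
                ≤ ‖F z * H₂ z‖ * ∏ p ∈ Sf, ‖z - p‖ :=
                  mul_le_mul_of_nonneg_left hSlow (norm_nonneg _)
              _ = ‖G z‖ * ∏ q ∈ Tf, ‖z - q‖ := habs
              _ ≤ ‖G z‖ * ((1 + B₁) * a) ^ t' :=
                  mul_le_mul_of_nonneg_left hTup (norm_nonneg _)
          have step2 : a ^ (N+1) * (‖G z‖ * ((1 + B₁) * a) ^ t')
              = C₀ * ‖G z‖ * (a/2) ^ s' := by
            have haN : a ^ ((N:ℤ)+1) = a ^ s' / a ^ t' := by
              rw [show (N:ℤ)+1 = (s':ℤ) - (t':ℤ) from hst.symm, zpow_sub₀ hane,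
                zpow_natCast, zpow_natCast]
            rw [haN, hC₀def, mul_pow (1 + B₁) a t', div_pow]
            field_simp
          rw [hXabs]
          exact le_trans step1 (le_of_eq step2)
        calc ‖z ^ (N+1) * F z * H₂ z‖ ^ 2 * Real.exp (-Real.pi * a ^ 2)
            ≤ (C₀ * ‖G z‖) ^ 2 * Real.exp (-Real.pi * a ^ 2) := by
              apply mul_le_mul_of_nonneg_right _ (Real.exp_nonneg _)
              exact pow_le_pow_left₀ (norm_nonneg _) hmain 2
          _ = C₀ ^ 2 * (‖G z‖ ^ 2 * Real.exp (-Real.pi * a ^ 2)) := by ring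
  · -- minimality
    intro l hl
    rcases hl with hlZ | hlS
    · -- l is a zero of F kept in Λ
      have hFl : F l = 0 := hlZ.1
      have hlT : l ∉ Tf := fun h => hlZ.2 (Finset.mem_coe.2 h)
      obtain ⟨Ψ, hΨF, hΨne, hΨv1, hΨv2⟩ := aux_witness hF hG₀d hG₀ne hFne hG₀F
        (insert l Tf) Sf
        (fun q hq => by
          rcases Finset.mem_insert.1 hq with rfl | hq2
          · exact hFl
          · exact hTfsub (Finset.mem_coe.2 hq2))
        (fun p hp => (hSfsub (Finset.mem_coe.2 hp)).1)
        (by rw [Finset.card_insert_of_notMem hlT, hTfcard, hSfcard]; push_cast; omega)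
      refine ⟨Ψ, hΨF, hΨne, ?_⟩
      intro μ hμ
      have hμl : μ ≠ l := fun hh => hμ.2 (mem_singleton_iff.2 hh)
      rcases hμ.1 with hμZ | hμS
      · refine hΨv1 μ hμZ.1 ?_
        intro hins
        rcases Finset.mem_insert.1 hins with rfl | h
        · exact hμl rfl
        · exact hμZ.2 (Finset.mem_coe.2 h)
      · exact hΨv2 μ (Finset.mem_coe.1 hμS)
    · -- l is an added point
      have hlSf : l ∈ Sf := Finset.mem_coe.1 hlS
      have hs1 : 1 ≤ s' := hSfcard ▸ Finset.card_pos.2 ⟨l, hlSf⟩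
      obtain ⟨Ψ, hΨF, hΨne, hΨv1, hΨv2⟩ := aux_witness hF hG₀d hG₀ne hFne hG₀F
        Tf (Sf.erase l)
        (fun q hq => hTfsub (Finset.mem_coe.2 hq))
        (fun p hp => (hSfsub (Finset.mem_coe.2 (Finset.mem_of_mem_erase hp))).1)
        (by rw [Finset.card_erase_of_mem hlSf, hSfcard, hTfcard]; push_cast [hs1]; omega)
      refine ⟨Ψ, hΨF, hΨne, ?_⟩
      intro μ hμ
      have hμl : μ ≠ l := fun hh => hμ.2 (mem_singleton_iff.2 hh)
      rcases hμ.1 with hμZ | hμS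
      · exact hΨv1 μ hμZ.1 (fun h => hμZ.2 (Finset.mem_coe.2 h))
      · exact hΨv2 μ (Finset.mem_erase.2 ⟨hμl, Finset.mem_coe.1 hμS⟩)
end
end

section
/- If {k_λ}_{λ∈Λ} is a complete system in the Fock space F, then the upper density D₊(Λ) = limsup_{r→∞} #(Λ ∩ B(0,r))/(πr²) satisfies D₊(Λ) ≥ 1/(3π). -/
open MeasureTheory Filter Set

lemma helper1 (r t : ℝ) (hr : 0 ≤ r) (ht : 0 < t) :
    ∫⁻ s in Ioi t, ENNReal.ofReal (3*r^3/s^4) = ENNReal.ofReal (r^3/t^3) := by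
  have heq : EqOn (fun s : ℝ => 3*r^3 * s ^ (-4:ℝ)) (fun s : ℝ => 3*r^3/s^4) (Ioi t) := by
    intro s hs
    have hs0 : 0 < s := lt_trans ht hs
    simp only []
    rw [Real.rpow_neg hs0.le, show (4:ℝ) = ((4:ℕ):ℝ) by norm_num, Real.rpow_natCast]
    ring
  have h0 : IntegrableOn (fun s : ℝ => s ^ (-4:ℝ)) (Ioi t) :=
    integrableOn_Ioi_rpow_of_lt (by norm_num) ht
  have hint : IntegrableOn (fun s : ℝ => 3*r^3/s^4) (Ioi t) :=
    (IntegrableOn.congr_fun (h0.const_mul (3*r^3)) heq measurableSet_Ioi)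
  rw [← ofReal_integral_eq_lintegral_ofReal hint]
  · congr 1
    rw [← setIntegral_congr_fun measurableSet_Ioi heq]
    rw [integral_const_mul]
    rw [integral_Ioi_rpow_of_lt (by norm_num) ht]
    rw [show (-4:ℝ) + 1 = -3 by norm_num]
    rw [Real.rpow_neg ht.le, show (3:ℝ) = ((3:ℕ):ℝ) by norm_num, Real.rpow_natCast]
    field_simp
  · filter_upwards [ae_restrict_mem measurableSet_Ioi] with s hs
    have hs0 : 0 < s := lt_trans ht hs
    positivity

lemma helper2 (t r : ℝ) (ht : 0 < t) (htr : t ≤ r) :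
    ∫⁻ s in Ioo t r, ENNReal.ofReal (3/s) = ENNReal.ofReal (3*(Real.log r - Real.log t)) := by
  have huIcc : ∀ x ∈ uIcc t r, x ≠ 0 := by
    intro x hx
    rw [uIcc_of_le htr] at hx
    exact ne_of_gt (lt_of_lt_of_le ht hx.1)
  have hii : IntervalIntegrable (fun x : ℝ => 1/x) volume t r :=
    intervalIntegral.intervalIntegrable_one_div huIcc continuousOn_id
  have hIoc : IntegrableOn (fun x : ℝ => 1/x) (Ioc t r) :=
    (intervalIntegrable_iff_integrableOn_Ioc_of_le htr).1 hii
  have hIoo : IntegrableOn (fun x : ℝ => 3*(1/x)) (Ioo t r) :=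
    (hIoc.mono_set Ioo_subset_Ioc_self).const_mul 3
  have heq : EqOn (fun s : ℝ => 3*(1/s)) (fun s : ℝ => 3/s) (Ioo t r) := by
    intro s _
    simp only [mul_one_div]
  rw [← ofReal_integral_eq_lintegral_ofReal (hIoo.congr_fun heq measurableSet_Ioo)]
  · congr 1
    rw [← setIntegral_congr_fun measurableSet_Ioo heq, integral_const_mul]
    rw [← integral_Ioc_eq_integral_Ioo, ← intervalIntegral.integral_of_le htr]
    rw [integral_one_div (by
      intro h0mem
      exact huIcc 0 h0mem rfl)]
    rw [Real.log_div (by linarith : r ≠ 0) (ne_of_gt ht)]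
  · filter_upwards [ae_restrict_mem measurableSet_Ioo] with s hs
    have : 0 < s := lt_trans ht hs.1
    positivity

lemma helper4 (r : ℝ) (hr : 0 < r) :
    ∫⁻ s in Ioi r, ENNReal.ofReal (r^3/s^2) = ENNReal.ofReal (r^2) := by
  have heq : EqOn (fun s : ℝ => r^3 * s ^ (-2:ℝ)) (fun s : ℝ => r^3/s^2) (Ioi r) := by
    intro s hs
    have hs0 : 0 < s := lt_trans hr hs
    simp only []
    rw [Real.rpow_neg hs0.le, show (2:ℝ) = ((2:ℕ):ℝ) by norm_num, Real.rpow_natCast]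
    ring
  have h0 : IntegrableOn (fun s : ℝ => s ^ (-2:ℝ)) (Ioi r) :=
    integrableOn_Ioi_rpow_of_lt (by norm_num) hr
  have hint : IntegrableOn (fun s : ℝ => r^3/s^2) (Ioi r) :=
    IntegrableOn.congr_fun (h0.const_mul (r^3)) heq measurableSet_Ioi
  rw [← ofReal_integral_eq_lintegral_ofReal hint]
  · congr 1
    rw [← setIntegral_congr_fun measurableSet_Ioi heq, integral_const_mul]
    rw [integral_Ioi_rpow_of_lt (by norm_num) hr, show (-2:ℝ) + 1 = -1 by norm_num]
    rw [Real.rpow_neg hr.le, Real.rpow_one]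
    field_simp
  · filter_upwards [ae_restrict_mem measurableSet_Ioi] with s hs
    have hs0 : 0 < s := lt_trans hr hs
    positivity

lemma helper3 (t r : ℝ) (ht : 0 ≤ t) (htr : t ≤ r) :
    ∫⁻ s in Ioo t r, ENNReal.ofReal s = ENNReal.ofReal ((r^2 - t^2)/2) := by
  have hIoo : IntegrableOn (fun x : ℝ => x) (Ioo t r) :=
    ((intervalIntegrable_iff_integrableOn_Ioc_of_le htr).1 intervalIntegral.intervalIntegrable_id).mono_set
      Ioo_subset_Ioc_self
  rw [← ofReal_integral_eq_lintegral_ofReal hIoo]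
  · congr 1
    rw [← integral_Ioc_eq_integral_Ioo, ← intervalIntegral.integral_of_le htr, integral_id]
  · filter_upwards [ae_restrict_mem measurableSet_Ioo] with s hs
    exact le_trans ht hs.1.le

lemma sum_log_bound (a : ℕ → ℂ) (R₀ : ℝ) (hR₀ : 1 ≤ R₀)
    (hfar : ∀ n, R₀ ≤ ‖a n‖)
    (hcnt : ∀ s : ℝ, R₀ ≤ s → ∀ N : Finset ℕ, (∀ n ∈ N, ‖a n‖ < s) → (N.card : ℝ) ≤ s^2/3)
    (r : ℝ) (hr : R₀ ≤ r) (N : Finset ℕ) :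
    ∑ n ∈ N, Real.log (1 + r^3 / ‖a n‖^3) ≤ (3/2) * r^2 := by
  have hr0 : (0:ℝ) < r := lt_of_lt_of_le (by linarith) hr
  have hR00 : (0:ℝ) < R₀ := by linarith
  set W : ℝ → ENNReal := fun s => if s < r then ENNReal.ofReal (3/s) else ENNReal.ofReal (3*r^3/s^4)
    with hW
  have hWmeas : Measurable W := by
    apply Measurable.ite (measurableSet_lt measurable_id measurable_const)
    · exact (measurable_const.div measurable_id).ennreal_ofReal
    · exact (measurable_const.div (measurable_id.pow_const 4)).ennreal_ofReal
  -- Claim 1 : pointwise domination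
  have claim1 : ∀ t : ℝ, R₀ ≤ t →
      ENNReal.ofReal (Real.log (1 + r^3 / t^3)) ≤ ∫⁻ s in Ioi t, W s := by
    intro t ht
    have ht0 : (0:ℝ) < t := lt_of_lt_of_le hR00 ht
    by_cases htr : r ≤ t
    · -- big t case : W = second branch on Ioi t
      have hcongr : ∀ s ∈ Ioi t, W s = ENNReal.ofReal (3*r^3/s^4) := by
        intro s hs
        rw [hW]
        simp only []
        rw [if_neg (by push_neg; exact le_trans htr (le_of_lt hs))]
      rw [setLIntegral_congr_fun measurableSet_Ioi hcongr]
      rw [helper1 r t hr0.le ht0]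
      apply ENNReal.ofReal_le_ofReal
      have hx : (0:ℝ) < 1 + r^3/t^3 := by positivity
      have := Real.log_le_sub_one_of_pos hx
      linarith
    · push_neg at htr
      -- small t case
      have hsub : Ioo t r ∪ Ioi r ⊆ Ioi t := by
        intro s hs
        rcases hs with hs | hs
        · exact hs.1
        · exact lt_trans htr hs
      have hdisj : Disjoint (Ioo t r) (Ioi r) := by
        apply Set.disjoint_left.2
        intro s hs1 hs2
        exact absurd hs1.2 (not_lt.2 hs2.le)
      calc ENNReal.ofReal (Real.log (1 + r^3 / t^3))
          ≤ ENNReal.ofReal (3*(Real.log r - Real.log t) + r^3/r^3) := by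
            apply ENNReal.ofReal_le_ofReal
            have h1 : (1:ℝ) ≤ r^3/t^3 := by
              rw [le_div_iff₀ (by positivity)]
              have := pow_le_pow_left₀ ht0.le htr.le 3
              linarith
            have h2 : Real.log (1 + r^3/t^3) ≤ Real.log (2 * (r^3/t^3)) := by
              apply Real.log_le_log (by positivity)
              linarith
            have h3 : Real.log (2 * (r^3/t^3)) = Real.log 2 + 3*Real.log r - 3*Real.log t := by
              rw [Real.log_mul (by norm_num) (by positivity), Real.log_div (by positivity) (by positivity),
                Real.log_pow, Real.log_pow]
              push_cast; ring
            have h4 : Real.log 2 ≤ 1 := by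
              have := Real.log_le_sub_one_of_pos (by norm_num : (0:ℝ) < 2)
              linarith
            have h5 : r^3/r^3 = 1 := by field_simp
            rw [h5]
            linarith
        _ = ENNReal.ofReal (3*(Real.log r - Real.log t)) + ENNReal.ofReal (r^3/r^3) := by
            rw [ENNReal.ofReal_add]
            · have := Real.log_le_log ht0 htr.le
              linarith
            · positivity
        _ = (∫⁻ s in Ioo t r, W s) + ∫⁻ s in Ioi r, W s := by
            have hcongr1 : ∀ s ∈ Ioo t r, W s = ENNReal.ofReal (3/s) := by
              intro s hs
              rw [hW]
              simp only []
              rw [if_pos hs.2]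
            have hcongr2 : ∀ s ∈ Ioi r, W s = ENNReal.ofReal (3*r^3/s^4) := by
              intro s hs
              rw [hW]
              simp only []
              rw [if_neg (not_lt.2 (le_of_lt hs))]
            have hpiece1 : ∫⁻ s in Ioo t r, W s = ENNReal.ofReal (3*(Real.log r - Real.log t)) := by
              rw [setLIntegral_congr_fun measurableSet_Ioo hcongr1]
              exact helper2 t r ht0 htr.le
            have hpiece2 : ∫⁻ s in Ioi r, W s = ENNReal.ofReal (r^3/r^3) := by
              rw [setLIntegral_congr_fun measurableSet_Ioi hcongr2]
              exact helper1 r r hr0.le hr0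
            rw [hpiece1, hpiece2]
        _ = ∫⁻ s in Ioo t r ∪ Ioi r, W s := (lintegral_union (f := W) measurableSet_Ioi hdisj).symm
        _ ≤ ∫⁻ s in Ioi t, W s := lintegral_mono_set hsub
    -- Step 2 : tsum bound via Tonelli
  have hmeas_n : ∀ n : ℕ, AEMeasurable ((Ioi ‖a n‖).indicator W) volume :=
    fun n => (hWmeas.indicator measurableSet_Ioi).aemeasurable
  have hpt : ∀ s : ℝ, (∑' n : ℕ, (Ioi ‖a n‖).indicator W s)
      ≤ (Ioi R₀).indicator (fun s => ENNReal.ofReal (s^2/3) * W s) s := by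
    intro s
    by_cases hs : R₀ < s
    · rw [Set.indicator_of_mem (mem_Ioi.2 hs)]
      have hrw : ∀ n : ℕ, (Ioi ‖a n‖).indicator W s
          = ((Ioi ‖a n‖).indicator (fun _ => (1:ENNReal)) s) * W s := by
        intro n
        by_cases h : s ∈ Ioi ‖a n‖
        · rw [indicator_of_mem h, indicator_of_mem h, one_mul]
        · rw [indicator_of_notMem h, indicator_of_notMem h, zero_mul]
      rw [tsum_congr hrw, ENNReal.tsum_mul_right]
      apply mul_le_mul_left
      rw [ENNReal.tsum_eq_iSup_sum]
      apply iSup_le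
      intro N'
      have hsum : ∑ n ∈ N', (Ioi ‖a n‖).indicator (fun _ => (1:ENNReal)) s
          = ((N'.filter (fun n => ‖a n‖ < s)).card : ENNReal) := by
        rw [← Finset.sum_boole]
        apply Finset.sum_congr rfl
        intro n _
        by_cases h : s ∈ Ioi ‖a n‖
        · rw [indicator_of_mem h, if_pos (mem_Ioi.1 h)]
        · rw [indicator_of_notMem h, if_neg (fun hc => h (mem_Ioi.2 hc))]
      rw [hsum, ← ENNReal.ofReal_natCast]
      apply ENNReal.ofReal_le_ofReal
      exact hcnt s hs.le _ (fun n hn => (Finset.mem_filter.1 hn).2)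
    · rw [Set.indicator_of_notMem (by simpa using hs)]
      have : ∀ n : ℕ, (Ioi ‖a n‖).indicator W s = 0 := by
        intro n
        apply indicator_of_notMem
        simp only [mem_Ioi, not_lt]
        push_neg at hs
        exact le_trans hs (hfar n)
      rw [tsum_congr this]
      simp
  have hsplit : Ioi R₀ ⊆ Ioo R₀ r ∪ Ici r := by
    intro s hs
    by_cases h : s < r
    · exact Or.inl ⟨hs, h⟩
    · exact Or.inr (not_lt.1 h)
  have hpiece1 : ∫⁻ s in Ioo R₀ r, ENNReal.ofReal (s^2/3) * W s
      = ENNReal.ofReal ((r^2 - R₀^2)/2) := by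
    have hcongr : ∀ s ∈ Ioo R₀ r, ENNReal.ofReal (s^2/3) * W s = ENNReal.ofReal s := by
      intro s hs
      have hs0 : (0:ℝ) < s := lt_trans hR00 hs.1
      rw [hW]
      simp only []
      rw [if_pos hs.2, ← ENNReal.ofReal_mul (by positivity)]
      congr 1
      field_simp
    rw [setLIntegral_congr_fun measurableSet_Ioo hcongr]
    exact helper3 R₀ r hR00.le hr
  have hpiece2 : ∫⁻ s in Ici r, ENNReal.ofReal (s^2/3) * W s = ENNReal.ofReal (r^2) := by
    rw [← setLIntegral_congr (Ioi_ae_eq_Ici (a := r))]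
    have hcongr : ∀ s ∈ Ioi r, ENNReal.ofReal (s^2/3) * W s = ENNReal.ofReal (r^3/s^2) := by
      intro s hs
      have hs0 : (0:ℝ) < s := lt_trans hr0 hs
      rw [hW]
      simp only []
      rw [if_neg (not_lt.2 (le_of_lt hs)), ← ENNReal.ofReal_mul (by positivity)]
      congr 1
      field_simp
    rw [setLIntegral_congr_fun measurableSet_Ioi hcongr]
    exact helper4 r hr0
  have step2 : (∑' n : ℕ, ENNReal.ofReal (Real.log (1 + r^3 / ‖a n‖^3)))
      ≤ ENNReal.ofReal ((3/2) * r^2) := by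
    calc (∑' n : ℕ, ENNReal.ofReal (Real.log (1 + r^3 / ‖a n‖^3)))
        ≤ ∑' n : ℕ, ∫⁻ s, (Ioi ‖a n‖).indicator W s := by
          apply ENNReal.tsum_le_tsum
          intro n
          rw [lintegral_indicator measurableSet_Ioi]
          exact claim1 _ (hfar n)
      _ = ∫⁻ s, ∑' n : ℕ, (Ioi ‖a n‖).indicator W s := (lintegral_tsum hmeas_n).symm
      _ ≤ ∫⁻ s, (Ioi R₀).indicator (fun s => ENNReal.ofReal (s^2/3) * W s) s := lintegral_mono hpt
      _ = ∫⁻ s in Ioi R₀, ENNReal.ofReal (s^2/3) * W s := lintegral_indicator measurableSet_Ioi _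
      _ ≤ ∫⁻ s in Ioo R₀ r ∪ Ici r, ENNReal.ofReal (s^2/3) * W s := lintegral_mono_set hsplit
      _ ≤ (∫⁻ s in Ioo R₀ r, ENNReal.ofReal (s^2/3) * W s)
            + ∫⁻ s in Ici r, ENNReal.ofReal (s^2/3) * W s := lintegral_union_le _ _ _
      _ = ENNReal.ofReal ((r^2 - R₀^2)/2) + ENNReal.ofReal (r^2) := by rw [hpiece1, hpiece2]
      _ ≤ ENNReal.ofReal ((3/2) * r^2) := by
          rw [← ENNReal.ofReal_add (by nlinarith) (by positivity)]
          apply ENNReal.ofReal_le_ofReal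
          nlinarith
  -- Step 3 : conclude
  have hnn : ∀ n ∈ N, (0:ℝ) ≤ Real.log (1 + r^3 / ‖a n‖^3) := by
    intro n _
    apply Real.log_nonneg
    have h0 : (0:ℝ) < ‖a n‖ := lt_of_lt_of_le hR00 (hfar n)
    have : (0:ℝ) ≤ r^3/‖a n‖^3 := by positivity
    linarith
  have hofreal : ENNReal.ofReal (∑ n ∈ N, Real.log (1 + r^3 / ‖a n‖^3))
      ≤ ENNReal.ofReal ((3/2) * r^2) := by
    rw [ENNReal.ofReal_sum_of_nonneg hnn]
    exact le_trans (ENNReal.sum_le_tsum N) step2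
  exact (ENNReal.ofReal_le_ofReal_iff (by positivity)).1 hofreal

lemma gauss_int (δ : ℝ) (hδ : 0 < δ) : Integrable (fun v : ℂ => Real.exp (-δ * ‖v‖^2)) := by
  have h := GaussianFourier.integrable_cexp_neg_mul_sq_norm_add (V := ℂ) (b := (δ:ℂ))
    (by simpa using hδ) 0 0
  apply h.norm.congr
  filter_upwards with v
  rw [Complex.norm_exp]
  norm_num [← Complex.ofReal_pow]

lemma fock_integrable {G : ℂ → ℂ} (hG : Continuous G) (C : ℝ) (hC : 0 ≤ C) (k : ℕ)
    (hbd : ∀ z, ‖G z‖ ≤ C * (1 + ‖z‖)^k * Real.exp ((3/2) * ‖z‖^2)) :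
    Integrable (fun z : ℂ => ‖G z‖ ^ 2 * Real.exp (-Real.pi * ‖z‖ ^ 2)) := by
  set δ : ℝ := Real.pi - 3 with hδdef
  have hδ : 0 < δ := by have := Real.pi_gt_three; simp only [hδdef]; linarith
  set C₃ : ℝ := C^2 * Real.exp (2 * (k:ℝ)^2 / δ) with hC₃
  have hint : Integrable (fun z : ℂ => C₃ * Real.exp (-(δ/2) * ‖z‖^2)) :=
    (gauss_int (δ/2) (by linarith)).const_mul _
  apply hint.mono'
  · apply Continuous.aestronglyMeasurable; continuity
  · filter_upwards with z
    have ha : (0:ℝ) ≤ ‖z‖ := norm_nonneg z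
    set a : ℝ := ‖z‖
    have h1 : ‖G z‖ ^ 2 ≤ (C * (1 + a)^k * Real.exp ((3/2) * a^2))^2 :=
      pow_le_pow_left₀ (norm_nonneg _) (hbd z) 2
    have habs : ‖z‖ = a := rfl
    have hnn : (0:ℝ) ≤ ‖G z‖ ^ 2 * Real.exp (-Real.pi * a ^ 2) := by positivity
    rw [Real.norm_of_nonneg hnn]
    have h2 : (1 + a)^(k*2) ≤ Real.exp (2 * k * a) := by
      calc (1 + a)^(k*2) ≤ (Real.exp a)^(k*2) := by
            apply pow_le_pow_left₀ (by linarith) (by linarith [Real.add_one_le_exp a])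
        _ = Real.exp (2 * k * a) := by
            rw [← Real.exp_nat_mul]; push_cast; ring_nf
    have h4 : 2 * (k:ℝ) * a ≤ δ/2 * a^2 + 2 * (k:ℝ)^2 / δ := by
      have key : δ/2*a^2 + 2*(k:ℝ)^2/δ - 2*(k:ℝ)*a = (δ*a - 2*(k:ℝ))^2/(2*δ) := by
        field_simp; ring
      have h5 : (0:ℝ) ≤ (δ*a - 2*(k:ℝ))^2/(2*δ) := by positivity
      linarith
    have h3 : 2 * (k:ℝ) * a + (3 - Real.pi) * a^2 ≤ 2 * (k:ℝ)^2 / δ + (-(δ/2) * a^2) := by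
      have hd : (3 - Real.pi) = -δ := by rw [hδdef]; ring
      rw [hd]; nlinarith [sq_nonneg a]
    have hE : Real.exp ((3/2) * a^2)^2 = Real.exp (3 * a^2) := by
      rw [sq, ← Real.exp_add]; ring_nf
    have hsq : (C * (1 + a)^k * Real.exp ((3/2) * a^2))^2
        = C^2 * (1 + a)^(k*2) * Real.exp (3 * a^2) := by
      rw [mul_pow, mul_pow, ← pow_mul, hE]
    calc ‖G z‖ ^ 2 * Real.exp (-Real.pi * a ^ 2)
        ≤ (C * (1 + a)^k * Real.exp ((3/2) * a^2))^2 * Real.exp (-Real.pi * a^2) := by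
          apply mul_le_mul_of_nonneg_right h1 (Real.exp_nonneg _)
      _ = C^2 * (1 + a)^(k*2) * Real.exp (3 * a^2 + (-Real.pi * a^2)) := by
          rw [hsq, Real.exp_add]; ring
      _ ≤ C^2 * Real.exp (2 * k * a) * Real.exp (3 * a^2 + (-Real.pi * a^2)) := by
          apply mul_le_mul_of_nonneg_right _ (Real.exp_nonneg _)
          apply mul_le_mul_of_nonneg_left h2 (by positivity)
      _ = C^2 * Real.exp (2 * (k:ℝ) * a + (3 - Real.pi) * a^2) := by
          rw [mul_assoc, ← Real.exp_add]; ring_nf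
      _ ≤ C^2 * Real.exp (2 * (k:ℝ)^2 / δ + (-(δ/2) * a^2)) := by
          apply mul_le_mul_of_nonneg_left (Real.exp_le_exp.2 h3) (by positivity)
      _ = C₃ * Real.exp (-(δ/2) * a^2) := by rw [hC₃, Real.exp_add]; ring

lemma exists_T (a : ℕ → ℂ) (R₀ : ℝ) (hR₀ : 1 ≤ R₀)
    (hfar : ∀ n, R₀ ≤ ‖a n‖)
    (hcnt : ∀ s : ℝ, R₀ ≤ s → ∀ N : Finset ℕ, (∀ n ∈ N, ‖a n‖ < s) → (N.card : ℝ) ≤ s^2/3) :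
    ∃ T : ℂ → ℂ, Differentiable ℂ T ∧ T 0 = 1 ∧ (∀ n, T (a n) = 0) ∧
      ∀ z, ‖T z‖ ≤ Real.exp ((3/2) * (‖z‖^2 + R₀^2)) := by
  classical
  have hR00 : (0:ℝ) < R₀ := by linarith
  have hanorm : ∀ n, (0:ℝ) < ‖a n‖ := fun n => lt_of_lt_of_le hR00 (hfar n)
  have hane : ∀ n, a n ≠ 0 := fun n => norm_ne_zero_iff.1 (ne_of_gt (hanorm n))
  set u : ℕ → ℝ := fun n => 1 / ‖a n‖^3 with hu
  have hu_nonneg : ∀ n, 0 ≤ u n := fun n => by have := hanorm n; positivity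
  set P : ℕ → ℂ → ℂ := fun N z => ∏ n ∈ Finset.range N, (1 - z^3/(a n)^3) with hP
  -- factor norm bound
  have hfac : ∀ (n : ℕ) (z : ℂ) (r : ℝ), ‖z‖ ≤ r →
      ‖1 - z^3/(a n)^3‖ ≤ 1 + r^3/‖a n‖^3 := by
    intro n z r hzr
    have hz0 : (0:ℝ) ≤ ‖z‖ := norm_nonneg z
    have h2 : ‖z^3/(a n)^3‖ = ‖z‖^3/‖a n‖^3 := by
      rw [norm_div, norm_pow, norm_pow]
    have h3 : ‖z‖^3/‖a n‖^3 ≤ r^3/‖a n‖^3 :=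
      div_le_div_of_nonneg_right (pow_le_pow_left₀ hz0 hzr 3) (pow_pos (hanorm n) 3).le
    calc ‖1 - z^3/(a n)^3‖ ≤ ‖(1:ℂ)‖ + ‖z^3/(a n)^3‖ :=
          norm_sub_le _ _
      _ = 1 + ‖z‖^3/‖a n‖^3 := by rw [norm_one, h2]
      _ ≤ 1 + r^3/‖a n‖^3 := by linarith
  -- uniform product bound
  have hPbound : ∀ (z : ℂ) (N : ℕ) (r : ℝ), ‖z‖ ≤ r → R₀ ≤ r →
      ‖P N z‖ ≤ Real.exp ((3/2) * r^2) := by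
    intro z N r hzr hr
    have h1 : ‖P N z‖ = ∏ n ∈ Finset.range N, ‖1 - z^3/(a n)^3‖ := by
      rw [hP]; exact norm_prod _ _
    have h2 : ∏ n ∈ Finset.range N, ‖1 - z^3/(a n)^3‖
        ≤ ∏ n ∈ Finset.range N, Real.exp (Real.log (1 + r^3/‖a n‖^3)) := by
      apply Finset.prod_le_prod
      · intro n _; exact norm_nonneg _
      · intro n _
        have h0 := hanorm n
        have hrp : (0:ℝ) < r := lt_of_lt_of_le hR00 hr
        rw [Real.exp_log (by positivity)]
        exact hfac n z r hzr
    rw [h1]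
    refine le_trans h2 ?_
    rw [← Real.exp_sum]
    exact Real.exp_le_exp.2 (sum_log_bound a R₀ hR₀ hfar hcnt r hr _)
  -- summability of u
  have hsumu : Summable u := by
    apply summable_of_sum_range_le hu_nonneg (c := 3/R₀)
    intro N
    have h1 : ∀ n, R₀^3 * u n ≤ 2 * Real.log (1 + R₀^3 * u n) := by
      intro n
      set x := R₀^3 * u n with hx
      have hx0 : 0 ≤ x := by have := hu_nonneg n; positivity
      have hx1 : x ≤ 1 := by
        rw [hx, hu]
        have h := pow_le_pow_left₀ hR00.le (hfar n) 3
        rw [mul_one_div, div_le_one (by have := hanorm n; positivity)]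
        exact h
      have hlog : x/2 ≤ Real.log (1 + x) := by
        have h2 : 1 - (1+x)⁻¹ ≤ Real.log (1+x) := Real.one_sub_inv_le_log_of_pos (by linarith)
        have h1x : (0:ℝ) < 1 + x := by linarith
        have h3 : (1+x)⁻¹ ≤ 1 - x/2 := by
          rw [inv_eq_one_div, div_le_iff₀ h1x]
          nlinarith
        linarith
      linarith
    have h2 : ∑ n ∈ Finset.range N, R₀^3 * u n
        ≤ 2 * ∑ n ∈ Finset.range N, Real.log (1 + R₀^3 * u n) := by
      rw [Finset.mul_sum]
      exact Finset.sum_le_sum (fun n _ => h1 n)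
    have h3 : ∑ n ∈ Finset.range N, Real.log (1 + R₀^3 * u n) ≤ (3/2) * R₀^2 := by
      have := sum_log_bound a R₀ hR₀ hfar hcnt R₀ le_rfl (Finset.range N)
      apply le_trans (le_of_eq ?_) this
      apply Finset.sum_congr rfl
      intro n _
      rw [hu]; congr 1; ring
    have h4 : ∑ n ∈ Finset.range N, R₀^3 * u n = R₀^3 * ∑ n ∈ Finset.range N, u n := by
      rw [Finset.mul_sum]
    have h5 : R₀^3 * ∑ n ∈ Finset.range N, u n ≤ 3 * R₀^2 := by
      rw [← h4]; linarith
    calc ∑ n ∈ Finset.range N, u n = (R₀^3 * ∑ n ∈ Finset.range N, u n) / R₀^3 := by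
          field_simp
      _ ≤ 3 * R₀^2 / R₀^3 := by
          exact div_le_div_of_nonneg_right h5 (pow_pos hR00 3).le
      _ = 3 / R₀ := by field_simp
    -- tails of u
  have htail : ∀ ε : ℝ, 0 < ε → ∃ N₀ : ℕ, ∀ M N : ℕ, N₀ ≤ N → N ≤ M →
      ∑ n ∈ Finset.Ico N M, u n ≤ ε := by
    intro ε hε
    have hcs : CauchySeq (fun N => ∑ n ∈ Finset.range N, u n) :=
      hsumu.hasSum.tendsto_sum_nat.cauchySeq
    rw [Metric.cauchySeq_iff] at hcs
    obtain ⟨N₀, hN₀⟩ := hcs ε hε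
    refine ⟨N₀, fun M N hN hNM => ?_⟩
    have := hN₀ M (le_trans hN hNM) N hN
    rw [Real.dist_eq] at this
    rw [Finset.sum_Ico_eq_sub _ hNM]
    exact le_trans (le_abs_self _) this.le
  -- uniform Cauchy on closed balls
  have hUC : ∀ R : ℝ, 0 < R → UniformCauchySeqOn P atTop (Metric.closedBall 0 R) := by
    intro R hR
    rw [Metric.uniformCauchySeqOn_iff]
    intro ε hε
    set rr := max R R₀ with hrr
    have hrrR : R ≤ rr := le_max_left _ _
    have hrrR₀ : R₀ ≤ rr := le_max_right _ _
    set E := Real.exp ((3/2) * rr^2) with hE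
    have hE0 : 0 < E := Real.exp_pos _
    have hden : (0:ℝ) < E * rr^3 + 1 := by positivity
    obtain ⟨N₀, hN₀⟩ := htail (ε / (E * rr^3 + 1)) (by positivity)
    refine ⟨N₀, fun m hm n hn x hx => ?_⟩
    rw [Metric.mem_closedBall, dist_zero_right] at hx
    have hxrr : ‖x‖ ≤ rr := le_trans hx hrrR
    -- wlog n ≤ m
    have key : ∀ M N : ℕ, N₀ ≤ N → N ≤ M → dist (P M x) (P N x) < ε := by
      intro M N hN hNM
      rw [dist_eq_norm]
      have htel : P M x - P N x = ∑ n ∈ Finset.Ico N M, (P (n+1) x - P n x) := by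
        rw [Finset.sum_Ico_eq_sub _ hNM, Finset.sum_range_sub (fun k => P k x),
          Finset.sum_range_sub (fun k => P k x)]
        ring
      have hstep : ∀ k : ℕ, ‖P (k+1) x - P k x‖ ≤ E * (rr^3 * u k) := by
        intro k
        have h1 : P (k+1) x - P k x = P k x * (- x^3/(a k)^3) := by
          rw [hP]
          simp only []
          rw [Finset.prod_range_succ]
          ring
        rw [h1]
        rw [norm_mul]
        have h2 : ‖P k x‖ ≤ E := hPbound x k rr hxrr hrrR₀
        have h3 : ‖- x^3/(a k)^3‖ = ‖x‖^3 * u k := by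
          rw [norm_div, norm_neg, norm_pow, norm_pow, hu]
          field_simp
        have h4 : ‖x‖^3 * u k ≤ rr^3 * u k :=
          mul_le_mul_of_nonneg_right (pow_le_pow_left₀ (norm_nonneg x) hxrr 3) (hu_nonneg k)
        calc ‖P k x‖ * ‖- x^3/(a k)^3‖ ≤ E * (‖x‖^3 * u k) := by
              rw [h3]
              exact mul_le_mul h2 le_rfl (by rw [← h3]; exact norm_nonneg _) hE0.le
          _ ≤ E * (rr^3 * u k) := mul_le_mul_of_nonneg_left h4 hE0.le
      calc ‖P M x - P N x‖ ≤ ∑ n ∈ Finset.Ico N M, ‖P (n+1) x - P n x‖ := by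
            rw [htel]; exact norm_sum_le _ _
        _ ≤ ∑ n ∈ Finset.Ico N M, E * (rr^3 * u n) := Finset.sum_le_sum (fun n _ => hstep n)
        _ = E * rr^3 * ∑ n ∈ Finset.Ico N M, u n := by rw [Finset.mul_sum]; congr 1; ext n; ring
        _ ≤ E * rr^3 * (ε / (E * rr^3 + 1)) := by
            apply mul_le_mul_of_nonneg_left (hN₀ M N hN hNM) (by positivity)
        _ < ε := by
            rw [mul_div_assoc']
            rw [div_lt_iff₀ hden]
            nlinarith
    rcases le_total n m with h | h
    · exact key m n hn h
    · rw [dist_comm]; exact key n m hm h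
  -- pointwise limit
  have hcau : ∀ z : ℂ, CauchySeq (fun N => P N z) := by
    intro z
    apply (hUC (‖z‖+1) (by positivity)).cauchySeq
    rw [Metric.mem_closedBall, dist_zero_right]
    linarith
  set T : ℂ → ℂ := fun z => limUnder atTop (fun N => P N z) with hT
  have htend : ∀ z, Tendsto (fun N => P N z) atTop (nhds (T z)) := fun z =>
    (hcau z).tendsto_limUnder
  -- differentiability of partial products
  have hPdiff : ∀ N, Differentiable ℂ (P N) := by
    intro N
    induction N with
    | zero =>
      rw [hP]
      simp only [Finset.range_zero, Finset.prod_empty]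
      exact differentiable_const 1
    | succ k ih =>
      have : P (k+1) = fun z => P k z * (1 - z^3/(a k)^3) := by
        funext z
        rw [hP]
        simp only []
        rw [Finset.prod_range_succ]
      rw [this]
      apply ih.mul
      apply Differentiable.sub (differentiable_const 1)
      apply Differentiable.div_const
      exact differentiable_pow 3
  -- differentiability of T
  have hTdiff : Differentiable ℂ T := by
    intro z
    have hR : (0:ℝ) < ‖z‖ + 1 := by positivity
    have htu : TendstoUniformlyOn P T atTop (Metric.closedBall 0 (‖z‖+1)) :=
      (hUC _ hR).tendstoUniformlyOn_of_tendsto (fun x _ => htend x)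
    have htlu : TendstoLocallyUniformlyOn P T atTop (Metric.ball 0 (‖z‖+1)) :=
      (htu.mono Metric.ball_subset_closedBall).tendstoLocallyUniformlyOn
    have hdiff : DifferentiableOn ℂ T (Metric.ball 0 (‖z‖+1)) :=
      htlu.differentiableOn (Filter.Eventually.of_forall (fun N => (hPdiff N).differentiableOn))
        Metric.isOpen_ball
    have hmem : z ∈ Metric.ball 0 (‖z‖+1) := by
      rw [Metric.mem_ball, dist_zero_right]; linarith
    exact hdiff.differentiableAt (Metric.isOpen_ball.mem_nhds hmem)
    -- T 0 = 1
  have hT0 : T 0 = 1 := by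
    have h1 : ∀ N : ℕ, P N 0 = 1 := by
      intro N
      rw [hP]
      apply Finset.prod_eq_one
      intro n _
      norm_num
    have h2 : Tendsto (fun N => P N 0) atTop (nhds 1) := by
      apply Tendsto.congr' (f₁ := fun _ => (1:ℂ))
      · filter_upwards with N
        exact (h1 N).symm
      · exact tendsto_const_nhds
    exact tendsto_nhds_unique (htend 0) h2
  -- vanishing
  have hTvan : ∀ n, T (a n) = 0 := by
    intro n
    have h1 : ∀ M : ℕ, n < M → P M (a n) = 0 := by
      intro M hM
      rw [hP]
      apply Finset.prod_eq_zero (Finset.mem_range.2 hM)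
      rw [div_self (pow_ne_zero 3 (hane n))]
      ring
    have h2 : Tendsto (fun M => P M (a n)) atTop (nhds 0) := by
      apply Tendsto.congr' (f₁ := fun _ => (0:ℂ))
      · rw [Filter.EventuallyEq, eventually_atTop]
        exact ⟨n+1, fun M hM => (h1 M (by omega)).symm⟩
      · exact tendsto_const_nhds
    exact tendsto_nhds_unique (htend (a n)) h2
  -- growth
  have hTgrow : ∀ z, ‖T z‖ ≤ Real.exp ((3/2) * (‖z‖^2 + R₀^2)) := by
    intro z
    set rr := max ‖z‖ R₀ with hrr
    have h1 : ‖T z‖ ≤ Real.exp ((3/2) * rr^2) := by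
      apply le_of_tendsto (htend z).norm
      filter_upwards with N
      exact hPbound z N rr (le_max_left _ _) (le_max_right _ _)
    refine le_trans h1 (Real.exp_le_exp.2 ?_)
    have h2 : rr^2 ≤ ‖z‖^2 + R₀^2 := by
      rcases max_cases ‖z‖ R₀ with ⟨h, _⟩ | ⟨h, _⟩ <;> rw [hrr, h] <;> nlinarith [norm_nonneg z, hR00]
    linarith
  exact ⟨T, hTdiff, hT0, hTvan, hTgrow⟩

lemma poly_diff (fs : Finset ℂ) : Differentiable ℂ (fun z => ∏ w ∈ fs, (z - w)) := by
  classical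
  induction fs using Finset.induction with
  | empty => simpa using differentiable_const (1:ℂ)
  | insert _ _ hnot ih =>
    simp only [Finset.prod_insert hnot]
    exact (differentiable_id.sub (differentiable_const _)).mul ih

lemma poly_bound (fs : Finset ℂ) (z : ℂ) :
    ‖∏ w ∈ fs, (z - w)‖ ≤ (∏ w ∈ fs, (1+‖w‖)) * (1+‖z‖)^fs.card := by
  classical
  rw [norm_prod]
  calc ∏ w ∈ fs, ‖z - w‖ ≤ ∏ w ∈ fs, (1+‖w‖)*(1+‖z‖) := by
        apply Finset.prod_le_prod (fun w _ => norm_nonneg _)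
        intro w _
        have h1 : ‖z - w‖ ≤ ‖z‖ + ‖w‖ := norm_sub_le z w
        have h2 : ‖z‖ + ‖w‖ ≤ (1+‖w‖)*(1+‖z‖) := by nlinarith [norm_nonneg z, norm_nonneg w]
        linarith
    _ = (∏ w ∈ fs, (1+‖w‖)) * (1+‖z‖)^fs.card := by
        rw [Finset.prod_mul_distrib, Finset.prod_const]

/-- If {k_λ}_{λ∈Λ} is complete in the Fock space (Λ is a uniqueness set), then
D₊(Λ) ≥ 1/(3π). -/
theorem stmt17 (Λ : Set ℂ)
    (hfin : ∀ r : ℝ, (Λ ∩ Metric.ball 0 r).Finite)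
    (hcomplete : ∀ G : ℂ → ℂ, MemFock G → (∀ l ∈ Λ, G l = 0) → G = 0) :
    ((1 / (3 * Real.pi) : ℝ) : EReal) ≤ Filter.limsup
      (fun r : ℝ =>
        (((Nat.card ↥(Λ ∩ Metric.ball 0 r) : ℝ) / (Real.pi * r ^ 2) : ℝ) : EReal))
      Filter.atTop := by
  classical
  by_contra hcon
  push_neg at hcon
  have hev := Filter.eventually_lt_of_limsup_lt hcon
  rw [eventually_atTop] at hev
  obtain ⟨R₁, hR₁⟩ := hev
  set R₀ : ℝ := max R₁ 1 with hR₀def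
  have hR₀1 : (1:ℝ) ≤ R₀ := le_max_right _ _
  have hR₀0 : (0:ℝ) < R₀ := by linarith
  have hπ := Real.pi_pos
  -- counting bound for finsets of Λ
  have hcard : ∀ s : ℝ, R₀ ≤ s → ∀ N : Finset ℂ, (↑N ⊆ Λ) → (∀ x ∈ N, ‖x‖ < s) →
      (N.card : ℝ) ≤ s^2/3 := by
    intro s hs N hNΛ hNs
    have hs0 : (0:ℝ) < s := lt_of_lt_of_le hR₀0 hs
    have h1 := hR₁ s (le_trans (le_max_left _ _) hs)
    rw [EReal.coe_lt_coe_iff] at h1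
    have h2 : (Nat.card ↥(Λ ∩ Metric.ball 0 s) : ℝ) ≤ s^2/3 := by
      have hq := (div_lt_div_iff₀ (by positivity) (by positivity)).1 h1
      nlinarith
    have h3 : N.card ≤ (hfin s).toFinset.card := by
      apply Finset.card_le_card
      intro x hx
      rw [Set.Finite.mem_toFinset]
      exact ⟨hNΛ hx, mem_ball_zero_iff.2 (hNs x hx)⟩
    have h4 : ((hfin s).toFinset.card : ℝ) = (Nat.card ↥(Λ ∩ Metric.ball 0 s) : ℝ) := by
      rw [Nat.card_coe_set_eq, Set.ncard_eq_toFinset_card _ (hfin s)]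
    calc (N.card : ℝ) ≤ ((hfin s).toFinset.card : ℝ) := by exact_mod_cast h3
      _ = _ := h4
      _ ≤ s^2/3 := h2
  -- the contradiction-producing construction
  have main : ∃ (G : ℂ → ℂ), MemFock G ∧ (∀ l ∈ Λ, G l = 0) ∧ ∃ z₁, G z₁ ≠ 0 := by
    rcases Set.finite_or_infinite Λ with hΛfin | hΛinf
    · -- finite case : polynomial
      set fs := hΛfin.toFinset with hfs
      set G : ℂ → ℂ := fun z => ∏ w ∈ fs, (z - w) with hG
      have hGdiff : Differentiable ℂ G := poly_diff fs
      have hGbd : ∀ z, ‖G z‖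
          ≤ ((∏ w ∈ fs, (1+‖w‖)) * (1+‖z‖)^fs.card) * Real.exp ((3/2) * ‖z‖^2) := by
        intro z
        have h1 := poly_bound fs z
        have h2 : (1:ℝ) ≤ Real.exp ((3/2) * ‖z‖^2) := Real.one_le_exp (by positivity)
        have h3 : (0:ℝ) ≤ (∏ w ∈ fs, (1+‖w‖)) * (1+‖z‖)^fs.card := by
          apply mul_nonneg _ (by positivity)
          apply Finset.prod_nonneg
          intro w _
          have := norm_nonneg w; linarith
        nlinarith [norm_nonneg (G z)]
      have hC0 : (0:ℝ) ≤ ∏ w ∈ fs, (1+‖w‖) := by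
        apply Finset.prod_nonneg; intro w _; have := norm_nonneg w; linarith
      refine ⟨G, ⟨hGdiff, fock_integrable hGdiff.continuous _ hC0 _ (fun z => by
        have := hGbd z; rw [mul_assoc] at this ⊢; exact this)⟩, ?_, ?_⟩
      · intro l hl
        rw [hG]
        apply Finset.prod_eq_zero (hΛfin.mem_toFinset.2 hl)
        ring
      · obtain ⟨z₁, hz₁⟩ := hΛfin.infinite_compl.nonempty
        refine ⟨z₁, ?_⟩
        rw [hG]
        simp only []
        rw [Finset.prod_ne_zero_iff]
        intro w hw
        rw [sub_ne_zero]
        intro h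
        exact hz₁ (by rw [h]; exact hΛfin.mem_toFinset.1 hw)
    · -- infinite case
      set Λbig : Set ℂ := Λ \ Metric.ball 0 R₀ with hΛbig
      have hΛcount : Λ.Countable := by
        have hcover : Λ ⊆ ⋃ n : ℕ, (Λ ∩ Metric.ball 0 n) := by
          intro x hx
          obtain ⟨n, hn⟩ := exists_nat_gt ‖x‖
          exact Set.mem_iUnion.2 ⟨n, hx, mem_ball_zero_iff.2 hn⟩
        exact (Set.countable_iUnion (fun n : ℕ => (hfin (n:ℝ)).countable)).mono hcover
      have hbigcount : Λbig.Countable := hΛcount.mono diff_subset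
      have hbiginf : Λbig.Infinite := by
        intro hbigfin
        exact hΛinf (((hbigfin.union (hfin R₀)).subset (fun x hx => by
          by_cases h : x ∈ Metric.ball 0 R₀
          · exact Or.inr ⟨hx, h⟩
          · exact Or.inl ⟨hx, h⟩)))
      -- enumeration
      haveI := hbigcount.to_subtype
      haveI := hbiginf.to_subtype
      have e : ↥Λbig ≃ ℕ := (nonempty_equiv_of_countable).some
      set a : ℕ → ℂ := fun n => (e.symm n : ℂ) with ha
      have hainj : Function.Injective a := fun m n hmn =>
        e.symm.injective (Subtype.coe_injective hmn)
      have hamem : ∀ n, a n ∈ Λbig := fun n => (e.symm n).2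
      have hasurj : ∀ x ∈ Λbig, ∃ n, a n = x := fun x hx => ⟨e ⟨x, hx⟩, by rw [ha]; simp⟩
      have hfar : ∀ n, R₀ ≤ ‖a n‖ := by
        intro n
        have h := (hamem n).2
        rw [mem_ball_zero_iff] at h
        linarith [not_lt.1 h]
      have hcnt : ∀ s : ℝ, R₀ ≤ s → ∀ N : Finset ℕ, (∀ n ∈ N, ‖a n‖ < s) →
          (N.card : ℝ) ≤ s^2/3 := by
        intro s hs N hN
        have h1 : (N.image a).card = N.card := Finset.card_image_of_injective N hainj
        rw [← h1]
        apply hcard s hs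
        · intro x hx
          simp only [Finset.coe_image, Set.mem_image, Finset.mem_coe] at hx
          obtain ⟨n, _, rfl⟩ := hx
          exact (hamem n).1
        · intro x hx
          rw [Finset.mem_image] at hx
          obtain ⟨n, hn, rfl⟩ := hx
          exact hN n hn
      obtain ⟨T, hTdiff, hT0, hTvan, hTgrow⟩ := exists_T a R₀ hR₀1 hfar hcnt
      set fs := (hfin R₀).toFinset with hfs
      set G : ℂ → ℂ := fun z => (∏ w ∈ fs, (z - w)) * T z with hG
      have hGdiff : Differentiable ℂ G := (poly_diff fs).mul hTdiff
      set C : ℝ := (∏ w ∈ fs, (1+‖w‖)) * Real.exp ((3/2) * R₀^2) with hC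
      have hprodnn : (0:ℝ) ≤ ∏ w ∈ fs, (1+‖w‖) := by
        apply Finset.prod_nonneg; intro w _; have := norm_nonneg w; linarith
      have hC0 : (0:ℝ) ≤ C := by rw [hC]; positivity
      have hGbd : ∀ z, ‖G z‖ ≤ C * (1+‖z‖)^fs.card * Real.exp ((3/2) * ‖z‖^2) := by
        intro z
        rw [hG]
        simp only []
        rw [norm_mul]
        have h1 := poly_bound fs z
        have h2 := hTgrow z
        have h3 : Real.exp ((3/2) * (‖z‖^2 + R₀^2))
            = Real.exp ((3/2) * R₀^2) * Real.exp ((3/2) * ‖z‖^2) := by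
          rw [← Real.exp_add]; ring_nf
        calc ‖∏ w ∈ fs, (z - w)‖ * ‖T z‖
            ≤ ((∏ w ∈ fs, (1+‖w‖)) * (1+‖z‖)^fs.card) * (Real.exp ((3/2) * R₀^2) * Real.exp ((3/2) * ‖z‖^2)) := by
              rw [← h3]
              apply mul_le_mul h1 h2 (norm_nonneg _)
              apply mul_nonneg hprodnn (by positivity)
          _ = C * (1+‖z‖)^fs.card * Real.exp ((3/2) * ‖z‖^2) := by rw [hC]; ring
      refine ⟨G, ⟨hGdiff, fock_integrable hGdiff.continuous C hC0 fs.card hGbd⟩, ?_, ?_⟩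
      · intro l hl
        rw [hG]
        simp only []
        by_cases h : l ∈ Metric.ball 0 R₀
        · rw [Finset.prod_eq_zero ((hfin R₀).mem_toFinset.2 ⟨hl, h⟩) (by ring : l - l = 0)]
          ring
        · obtain ⟨n, rfl⟩ := hasurj l ⟨hl, h⟩
          rw [hTvan n]
          ring
      · -- nonvanishing near 0
        have hcont : ContinuousAt T 0 := hTdiff.continuous.continuousAt
        have hne := hcont.eventually_ne (by rw [hT0]; exact one_ne_zero)
        rw [Metric.eventually_nhds_iff] at hne
        obtain ⟨δ, hδ0, hδ⟩ := hne
        have hIoo : (Set.Ioo (0:ℝ) δ).Infinite := Set.infinite_coe_iff.1 (Set.Ioo.infinite hδ0)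
        have himg : ((fun t : ℝ => (t:ℂ)) '' Set.Ioo 0 δ).Infinite :=
          Set.Infinite.image (fun x _ y _ h => Complex.ofReal_injective h) hIoo
        obtain ⟨z₁, hz₁img, hz₁fs⟩ := (himg.diff fs.finite_toSet).nonempty
        obtain ⟨t, ht, rfl⟩ := hz₁img
        refine ⟨(t:ℂ), ?_⟩
        rw [hG]
        simp only []
        apply mul_ne_zero
        · rw [Finset.prod_ne_zero_iff]
          intro w hw
          rw [sub_ne_zero]
          intro h
          exact hz₁fs (show (t:ℂ) ∈ (fs : Set ℂ) by rw [h]; exact Finset.mem_coe.2 hw)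
        · apply hδ
          rw [dist_zero_right, Complex.norm_real, Real.norm_eq_abs, abs_of_pos ht.1]
          exact ht.2
  obtain ⟨G, hGF, hGv, z₁, hz₁⟩ := main
  have := hcomplete G hGF hGv
  rw [this] at hz₁
  exact hz₁ rfl
end
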